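/- arXiv:2601.15601 — 3 statements merged into one kernel-verified Lean document; each statement's English description precedes it below -/
import Mathlib

section
/- For every integer n > 2, sptbar_1_o(n) + sptbar_1_o(n−2) = 2·pbar_e(n−1) + pbar_oex(n−1), where pbar_e(m) is the number of overpartitions of m into even parts and pbar_oex(m) is the number of overpartitions of m into odd parts with no non-overlined parts equal to 1. -/
open scoped BigOperators

/-- The finite q-Pochhammer symbol `(a; q)_N = ∏_{j=0}^{N-1} (1 - a q^j)`. -/
noncomputable def qPoch (a q : ℂ) (N : ℕ) : ℂ := ∏ j ∈ Finset.range N, (1 - a * q ^ j)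

/-- The infinite q-Pochhammer symbol `(a; q)_∞ = ∏_{j=0}^{∞} (1 - a q^j)`. -/
noncomputable def qPochInf (a q : ℂ) : ℂ := ∏' j : ℕ, (1 - a * q ^ j)

/-- An overpartition of `n`: a multiset of positive non-overlined parts together with a
finset of positive overlined parts (the overlined parts are distinct), with total sum `n`. -/
structure Overpartition (n : ℕ) where
  parts : Multiset ℕ
  overlined : Finset ℕ
  parts_pos : ∀ x ∈ parts, 0 < x
  overlined_pos : ∀ x ∈ overlined, 0 < x
  sum_eq : parts.sum + ∑ x ∈ overlined, x = n

/-- `s` is the smallest non-overlined part of `π`, it appears exactly `k` times among the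
non-overlined parts, and every overlined part is greater than `s`. -/
def SptbarCond (k : ℕ) {n : ℕ} (π : Overpartition n) (s : ℕ) : Prop :=
  s ∈ π.parts ∧ (∀ x ∈ π.parts, s ≤ x) ∧ π.parts.count s = k ∧ ∀ x ∈ π.overlined, s < x

/-- `SptbarCond` together with: every part other than `s` is incongruent to `s` modulo 2. -/
def SptbarOCond (k : ℕ) {n : ℕ} (π : Overpartition n) (s : ℕ) : Prop :=
  SptbarCond k π s ∧ (∀ x ∈ π.parts, x ≠ s → x % 2 ≠ s % 2) ∧
    ∀ x ∈ π.overlined, x % 2 ≠ s % 2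

/-- The number of parts of `π` that are greater than `s`. -/
def numGreater {n : ℕ} (π : Overpartition n) (s : ℕ) : ℕ :=
  (π.parts.filter (fun x => s < x)).card + π.overlined.card

/-- The total number of parts of the overpartition `π`. -/
def numParts {n : ℕ} (π : Overpartition n) : ℕ :=
  π.parts.card + π.overlined.card

/-- `sptbar k n`: the number of overpartitions of `n` whose smallest non-overlined part `s`
appears exactly `k` times and all of whose overlined parts are greater than `s`. -/
noncomputable def sptbar (k n : ℕ) : ℕ :=
  Nat.card {π : Overpartition n // ∃ s, SptbarCond k π s}

/-- `sptbar' k n = a_e(k,n) - a_o(k,n)`. -/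
noncomputable def sptbar' (k n : ℕ) : ℤ :=
  (Nat.card {π : Overpartition n // ∃ s, SptbarCond k π s ∧ Even (numGreater π s)} : ℤ) -
    (Nat.card {π : Overpartition n // ∃ s, SptbarCond k π s ∧ Odd (numGreater π s)} : ℤ)

/-- `sptbarO k n`: as `sptbar k n`, with all parts other than the smallest non-overlined part
incongruent to it modulo 2. -/
noncomputable def sptbarO (k n : ℕ) : ℕ :=
  Nat.card {π : Overpartition n // ∃ s, SptbarOCond k π s}

/-- `sptbarO' k n = b_e(k,n) - b_o(k,n)`. -/
noncomputable def sptbarO' (k n : ℕ) : ℤ :=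
  (Nat.card {π : Overpartition n // ∃ s, SptbarOCond k π s ∧ Even (numGreater π s)} : ℤ) -
    (Nat.card {π : Overpartition n // ∃ s, SptbarOCond k π s ∧ Odd (numGreater π s)} : ℤ)

/-- The number of overpartitions of `n` into even parts. -/
noncomputable def pbarE (n : ℕ) : ℕ :=
  Nat.card {π : Overpartition n // (∀ x ∈ π.parts, Even x) ∧ ∀ x ∈ π.overlined, Even x}

/-- The number of overpartitions of `n` into odd parts with no non-overlined part equal to 1. -/
noncomputable def pbarOex (n : ℕ) : ℕ :=
  Nat.card {π : Overpartition n //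
    (∀ x ∈ π.parts, Odd x) ∧ (∀ x ∈ π.overlined, Odd x) ∧ (1 : ℕ) ∉ π.parts}

/-- Among overpartitions of `n` into odd parts with no non-overlined 1's: the number of those
with an even number of parts minus the number of those with an odd number of parts. -/
noncomputable def pbarOex' (n : ℕ) : ℤ :=
  (Nat.card {π : Overpartition n // ((∀ x ∈ π.parts, Odd x) ∧ (∀ x ∈ π.overlined, Odd x) ∧
      (1 : ℕ) ∉ π.parts) ∧ Even (numParts π)} : ℤ) -
    (Nat.card {π : Overpartition n // ((∀ x ∈ π.parts, Odd x) ∧ (∀ x ∈ π.overlined, Odd x) ∧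
      (1 : ℕ) ∉ π.parts) ∧ Odd (numParts π)} : ℤ)

/-- `sptkd k n`: the number of partitions of `n` whose smallest part appears exactly `k`
times and all of whose remaining parts are distinct. -/
noncomputable def sptkd (k n : ℕ) : ℕ :=
  Nat.card {m : Multiset ℕ // (∀ x ∈ m, 0 < x) ∧ m.sum = n ∧
    ∃ s, s ∈ m ∧ (∀ x ∈ m, s ≤ x) ∧ m.count s = k ∧ ∀ x ∈ m, x ≠ s → m.count x = 1}


namespace SptAux

theorem op_ext {n : ℕ} {π ρ : Overpartition n} (h1 : π.parts = ρ.parts)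
    (h2 : π.overlined = ρ.overlined) : π = ρ := by
  cases π; cases ρ; simp_all

theorem mem_le_sum {s : Multiset ℕ} {a : ℕ} (h : a ∈ s) : a ≤ s.sum := by
  induction s using Multiset.induction with
  | empty => simp at h
  | cons b t ih =>
    rw [Multiset.mem_cons] at h
    rw [Multiset.sum_cons]
    rcases h with rfl | h
    · omega
    · have := ih h; omega

theorem card_le_sum {s : Multiset ℕ} (h : ∀ x ∈ s, 0 < x) : Multiset.card s ≤ s.sum := by
  induction s using Multiset.induction with
  | empty => simp
  | cons b t ih =>
    rw [Multiset.sum_cons]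
    have hb := h b (by simp)
    have := ih (fun x hx => h x (Multiset.mem_cons_of_mem hx))
    simp only [Multiset.card_cons]
    omega

instance opFinite (n : ℕ) : Finite (Overpartition n) := by
  classical
  set T : Multiset ℕ := n • (Finset.range (n + 1)).val with hT
  set R : Finset ℕ := Finset.range (n + 1) with hR
  have hparts : ∀ π : Overpartition n, π.parts ≤ T := by
    intro π
    rw [Multiset.le_iff_count]
    intro a
    by_cases ha : a ∈ π.parts
    · have ha1 : a ≤ n := by
        have := mem_le_sum ha; have := π.sum_eq; omega
      have hcount : π.parts.count a ≤ n := by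
        have h1 := Multiset.count_le_card a π.parts
        have h2 := card_le_sum π.parts_pos
        have := π.sum_eq; omega
      have : T.count a = n * 1 := by
        rw [hT, Multiset.count_nsmul]
        congr 1
        exact Multiset.count_eq_one_of_mem (Finset.range (n + 1)).nodup
          (by simp only [hR, Finset.mem_val, Finset.mem_range]; omega)
      omega
    · simp [Multiset.count_eq_zero.mpr ha]
  have hov : ∀ π : Overpartition n, π.overlined ⊆ R := by
    intro π a ha
    have h1 : a ≤ ∑ x ∈ π.overlined, x := Finset.single_le_sum (fun x _ => Nat.zero_le x) ha
    have := π.sum_eq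
    exact Finset.mem_range.mpr (by omega)
  have fin1 : Finite {s : Multiset ℕ // s ≤ T} := by
    apply Finite.of_injective
      (fun s : {s : Multiset ℕ // s ≤ T} =>
        (⟨s.1, by simpa [Multiset.mem_powerset] using s.2⟩ : {x // x ∈ T.powerset.toFinset}))
    intro a b hab
    simpa [Subtype.ext_iff] using hab
  have fin2 : Finite {f : Finset ℕ // f ⊆ R} := by
    apply Finite.of_injective
      (fun f : {f : Finset ℕ // f ⊆ R} =>
        (⟨f.1, Finset.mem_powerset.mpr f.2⟩ : {x // x ∈ R.powerset}))
    intro a b hab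
    simpa [Subtype.ext_iff] using hab
  apply Finite.of_injective
    (fun π : Overpartition n =>
      ((⟨π.parts, hparts π⟩, ⟨π.overlined, hov π⟩) :
        {s : Multiset ℕ // s ≤ T} × {f : Finset ℕ // f ⊆ R}))
  intro a b hab
  simp only [Prod.mk.injEq, Subtype.mk.injEq] at hab
  exact op_ext hab.1 hab.2

theorem cond_unique {k m : ℕ} {π : Overpartition m} {s s' : ℕ}
    (h : SptbarCond k π s) (h' : SptbarCond k π s') : s = s' :=
  le_antisymm (h.2.1 s' h'.1) (h'.2.1 s h.1)

theorem condO_unique {k m : ℕ} {π : Overpartition m} {s s' : ℕ}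
    (h : SptbarOCond k π s) (h' : SptbarOCond k π s') : s = s' :=
  cond_unique h.1 h'.1

/-- `a` is the minimum part (overlined or not) of `ρ`. -/
def IsMin {m : ℕ} (ρ : Overpartition m) (a : ℕ) : Prop :=
  (a ∈ ρ.parts ∨ a ∈ ρ.overlined) ∧ ∀ x, (x ∈ ρ.parts ∨ x ∈ ρ.overlined) → a ≤ x

theorem isMin_unique {m : ℕ} {ρ : Overpartition m} {a b : ℕ}
    (h : IsMin ρ a) (h' : IsMin ρ b) : a = b :=
  le_antisymm (h.2 b h'.1) (h'.2 a h.1)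

theorem exists_isMin {m : ℕ} (ρ : Overpartition m) (hm : 0 < m) : ∃ a, IsMin ρ a := by
  classical
  have hmem : ∀ x, x ∈ ρ.parts.toFinset ∪ ρ.overlined ↔ (x ∈ ρ.parts ∨ x ∈ ρ.overlined) := by
    intro x; simp [Finset.mem_union, Multiset.mem_toFinset]
  have hne : (ρ.parts.toFinset ∪ ρ.overlined).Nonempty := by
    by_contra h
    rw [Finset.not_nonempty_iff_eq_empty] at h
    have hp : ρ.parts = 0 := by
      by_contra hp
      rcases Multiset.exists_mem_of_ne_zero hp with ⟨x, hx⟩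
      have : x ∈ ρ.parts.toFinset ∪ ρ.overlined := (hmem x).mpr (Or.inl hx)
      rw [h] at this; simp at this
    have ho : ρ.overlined = ∅ := by
      by_contra ho
      rcases Finset.nonempty_iff_ne_empty.mpr ho with ⟨y, hy⟩
      have : y ∈ ρ.parts.toFinset ∪ ρ.overlined := (hmem y).mpr (Or.inr hy)
      rw [h] at this; simp at this
    have h2 := ρ.sum_eq
    rw [hp, ho] at h2; simp at h2; omega
  refine ⟨(ρ.parts.toFinset ∪ ρ.overlined).min' hne, ?_, ?_⟩
  · exact (hmem _).mp (Finset.min'_mem _ hne)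
  · intro x hx
    exact Finset.min'_le _ x ((hmem x).mpr hx)

def ParX (c : ℕ) {m : ℕ} (ρ : Overpartition m) : Prop :=
  (∀ x ∈ ρ.parts, x % 2 = c) ∧ (∀ x ∈ ρ.overlined, x % 2 = c) ∧ (c = 1 → (1 : ℕ) ∉ ρ.parts)

def MinIn {m : ℕ} (ρ : Overpartition m) : Prop := ∃ a, IsMin ρ a ∧ a ∈ ρ.parts
def MinNon {m : ℕ} (ρ : Overpartition m) : Prop := ∃ a, IsMin ρ a ∧ a ∉ ρ.parts

theorem card_split {α : Type*} [Finite α] (p q : α → Prop) :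
    Nat.card {x // p x} = Nat.card {x // p x ∧ q x} + Nat.card {x // p x ∧ ¬q x} := by
  classical
  rw [← Nat.card_sum]
  apply Nat.card_congr
  exact {
    toFun := fun x => if h : q x.1 then .inl ⟨x.1, x.2, h⟩ else .inr ⟨x.1, x.2, h⟩
    invFun := Sum.elim (fun x => ⟨x.1, x.2.1⟩) (fun x => ⟨x.1, x.2.1⟩)
    left_inv := by intro x; by_cases h : q x.1 <;> simp [h]
    right_inv := by rintro (⟨x, hx, hq⟩ | ⟨x, hx, hq⟩) <;> simp [hq] }

/-! ### Extraction of canonical witnesses -/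

theorem ex_of {m : ℕ} {π : Overpartition m} {P : ℕ → Prop}
    (h : ∃ s, SptbarOCond 1 π s ∧ P s) : ∃ s, SptbarOCond 1 π s :=
  h.imp fun _ hs => hs.1

noncomputable def sOf {m : ℕ} (π : Overpartition m) (h : ∃ s, SptbarOCond 1 π s) : ℕ :=
  h.choose

theorem sOf_spec {m : ℕ} (π : Overpartition m) (h : ∃ s, SptbarOCond 1 π s) :
    SptbarOCond 1 π (sOf π h) := h.choose_spec

theorem sOf_eq {m : ℕ} {π : Overpartition m} (h : ∃ s, SptbarOCond 1 π s) {s : ℕ}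
    (hs : SptbarOCond 1 π s) : sOf π h = s :=
  condO_unique (sOf_spec π h) hs

theorem sOf_P {m : ℕ} {π : Overpartition m} {P : ℕ → Prop}
    (h : ∃ s, SptbarOCond 1 π s ∧ P s) : P (sOf π (ex_of h)) := by
  obtain ⟨s, hs, hP⟩ := id h
  rw [sOf_eq (ex_of h) hs]
  exact hP

noncomputable def mNon {m : ℕ} (ρ : Overpartition m) (h : MinNon ρ) : ℕ := h.choose

theorem mNon_spec {m : ℕ} (ρ : Overpartition m) (h : MinNon ρ) :
    IsMin ρ (mNon ρ h) ∧ mNon ρ h ∉ ρ.parts := h.choose_spec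

theorem mNon_eq {m : ℕ} {ρ : Overpartition m} (h : MinNon ρ) {a : ℕ}
    (ha : IsMin ρ a) : mNon ρ h = a :=
  isMin_unique (mNon_spec ρ h).1 ha

theorem mNon_mem_ov {m : ℕ} (ρ : Overpartition m) (h : MinNon ρ) :
    mNon ρ h ∈ ρ.overlined := by
  rcases (mNon_spec ρ h).1.1 with hp | ho
  · exact absurd hp (mNon_spec ρ h).2
  · exact ho

noncomputable def mIn {m : ℕ} (ρ : Overpartition m) (h : MinIn ρ) : ℕ := h.choose

theorem mIn_spec {m : ℕ} (ρ : Overpartition m) (h : MinIn ρ) :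
    IsMin ρ (mIn ρ h) ∧ mIn ρ h ∈ ρ.parts := h.choose_spec

theorem mIn_eq {m : ℕ} {ρ : Overpartition m} (h : MinIn ρ) {a : ℕ}
    (ha : IsMin ρ a) : mIn ρ h = a :=
  isMin_unique (mIn_spec ρ h).1 ha

/-! ### Basic consequences of `SptbarOCond 1` -/

theorem cond_mem_erase {m : ℕ} {π : Overpartition m} {s : ℕ} (h : SptbarOCond 1 π s) :
    ∀ x ∈ π.parts.erase s, s < x ∧ x % 2 ≠ s % 2 := by
  intro x hx
  have hxmem : x ∈ π.parts := Multiset.mem_of_mem_erase hx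
  have hxne : x ≠ s := by
    rintro rfl
    have h0 : (π.parts.erase x).count x = 0 := by
      rw [Multiset.count_erase_self, h.1.2.2.1]
    exact (Multiset.count_eq_zero.mp h0) hx
  exact ⟨lt_of_le_of_ne (h.1.2.1 x hxmem) (Ne.symm hxne), h.2.1 x hxmem hxne⟩

theorem cond_sum {m : ℕ} {π : Overpartition m} {s : ℕ} (hs : s ∈ π.parts) :
    s + (π.parts.erase s).sum + ∑ x ∈ π.overlined, x = m := by
  have h1 := π.sum_eq
  have h2 : π.parts.sum = s + (π.parts.erase s).sum := by
    conv_lhs => rw [← Multiset.cons_erase hs, Multiset.sum_cons]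
  omega

theorem cond_pos {m : ℕ} {π : Overpartition m} {s : ℕ} (h : SptbarOCond 1 π s) : 1 ≤ s :=
  π.parts_pos s h.1.1

/-! ### The bijection for pieces with `s ≥ 2` at level `N + 1` -/

noncomputable def fA (N r : ℕ)
    (x : {π : Overpartition (N + 1) // ∃ s, SptbarOCond 1 π s ∧ s % 2 = r ∧ 1 < s}) :
    Overpartition N where
  parts := x.1.parts.erase (sOf x.1 (ex_of x.2))
  overlined := insert (sOf x.1 (ex_of x.2) - 1) x.1.overlined
  parts_pos := fun y hy => x.1.parts_pos y (Multiset.mem_of_mem_erase hy)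
  overlined_pos := by
    intro y hy
    have h2 : 1 < sOf x.1 (ex_of x.2) := (sOf_P x.2).2
    rcases Finset.mem_insert.mp hy with rfl | hy
    · omega
    · exact x.1.overlined_pos y hy
  sum_eq := by
    have hcond := sOf_spec x.1 (ex_of x.2)
    have h2 : 1 < sOf x.1 (ex_of x.2) := (sOf_P x.2).2
    have hnotin : sOf x.1 (ex_of x.2) - 1 ∉ x.1.overlined := by
      intro hmem
      have := hcond.1.2.2.2 _ hmem
      omega
    rw [Finset.sum_insert hnotin]
    have hsum := cond_sum hcond.1.1
    omega

theorem fA_isMin (N r : ℕ)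
    (x : {π : Overpartition (N + 1) // ∃ s, SptbarOCond 1 π s ∧ s % 2 = r ∧ 1 < s}) :
    IsMin (fA N r x) (sOf x.1 (ex_of x.2) - 1) := by
  have hcond := sOf_spec x.1 (ex_of x.2)
  constructor
  · exact Or.inr (Finset.mem_insert_self _ _)
  · rintro y (hy | hy)
    · have := (cond_mem_erase hcond y hy).1; omega
    · rcases Finset.mem_insert.mp hy with rfl | hy
      · exact le_refl _
      · have := hcond.1.2.2.2 _ hy; omega

theorem fA_mem (N r : ℕ) (hr : r ≤ 1)
    (x : {π : Overpartition (N + 1) // ∃ s, SptbarOCond 1 π s ∧ s % 2 = r ∧ 1 < s}) :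
    ParX (1 - r) (fA N r x) ∧ MinNon (fA N r x) := by
  have hcond := sOf_spec x.1 (ex_of x.2)
  have hP := sOf_P x.2
  have hpar : sOf x.1 (ex_of x.2) % 2 = r := hP.1
  have h2 : 1 < sOf x.1 (ex_of x.2) := hP.2
  refine ⟨⟨?_, ?_, ?_⟩, ?_⟩
  · intro y hy
    have := (cond_mem_erase hcond y hy).2
    omega
  · intro y hy
    rcases Finset.mem_insert.mp hy with rfl | hy
    · omega
    · have := hcond.2.2 y hy; omega
  · intro _ h1
    have := (cond_mem_erase hcond 1 h1).1
    omega
  · refine ⟨sOf x.1 (ex_of x.2) - 1, fA_isMin N r x, fun hmem => ?_⟩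
    have := (cond_mem_erase hcond _ hmem).1
    omega

noncomputable def gA (N r : ℕ)
    (x : {ρ : Overpartition N // ParX (1 - r) ρ ∧ MinNon ρ}) :
    Overpartition (N + 1) where
  parts := (mNon x.1 x.2.2 + 1) ::ₘ x.1.parts
  overlined := x.1.overlined.erase (mNon x.1 x.2.2)
  parts_pos := by
    intro y hy
    rcases Multiset.mem_cons.mp hy with rfl | hy
    · omega
    · exact x.1.parts_pos y hy
  overlined_pos := fun y hy => x.1.overlined_pos y (Finset.mem_of_mem_erase hy)
  sum_eq := by
    set m := mNon x.1 x.2.2 with hm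
    have hov : m ∈ x.1.overlined := mNon_mem_ov x.1 x.2.2
    have herase := Finset.add_sum_erase x.1.overlined id hov
    have hsum := x.1.sum_eq
    rw [Multiset.sum_cons]
    simp only [id] at herase
    omega

theorem gA_cond (N r : ℕ) (hr : r ≤ 1)
    (x : {ρ : Overpartition N // ParX (1 - r) ρ ∧ MinNon ρ}) :
    SptbarOCond 1 (gA N r x) (mNon x.1 x.2.2 + 1) := by
  set m := mNon x.1 x.2.2 with hm
  have hmin := (mNon_spec x.1 x.2.2).1
  have hnp : m ∉ x.1.parts := (mNon_spec x.1 x.2.2).2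
  have hov : m ∈ x.1.overlined := mNon_mem_ov x.1 x.2.2
  have hpm : m % 2 = 1 - r := x.2.1.2.1 m hov
  have hparts : ∀ y ∈ x.1.parts, m + 1 ≤ y ∧ y % 2 = 1 - r := by
    intro y hy
    have h1 := hmin.2 y (Or.inl hy)
    have h2 : y ≠ m := fun h => hnp (h ▸ hy)
    exact ⟨by omega, x.2.1.1 y hy⟩
  have hovr : ∀ y ∈ x.1.overlined.erase m, m + 1 < y ∧ y % 2 = 1 - r := by
    intro y hy
    have h1 : y ∈ x.1.overlined := Finset.mem_of_mem_erase hy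
    have h2 : y ≠ m := (Finset.mem_erase.mp hy).1
    have h3 := hmin.2 y (Or.inr h1)
    have h4 : y % 2 = 1 - r := x.2.1.2.1 y h1
    refine ⟨?_, h4⟩
    have h6 : y ≠ m + 1 := by
      intro h
      rw [h] at h4
      omega
    omega
  refine ⟨⟨Multiset.mem_cons_self _ _, ?_, ?_, ?_⟩, ?_, ?_⟩
  · intro y hy
    rcases Multiset.mem_cons.mp hy with rfl | hy
    · exact le_refl _
    · exact (hparts y hy).1
  · show Multiset.count (m + 1) ((m + 1) ::ₘ x.1.parts) = 1
    rw [Multiset.count_cons_self]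
    have : (m + 1) ∉ x.1.parts := by
      intro hc
      have := (hparts _ hc).2
      omega
    rw [Multiset.count_eq_zero.mpr this]
  · intro y hy
    exact (hovr y hy).1
  · intro y hy hne
    rcases Multiset.mem_cons.mp hy with rfl | hy
    · exact absurd rfl hne
    · have := (hparts y hy).2; omega
  · intro y hy
    have := (hovr y hy).2; omega

theorem gA_mem (N r : ℕ) (hr : r ≤ 1)
    (x : {ρ : Overpartition N // ParX (1 - r) ρ ∧ MinNon ρ}) :
    ∃ s, SptbarOCond 1 (gA N r x) s ∧ s % 2 = r ∧ 1 < s := by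
  refine ⟨mNon x.1 x.2.2 + 1, gA_cond N r hr x, ?_, ?_⟩
  · have hpm : mNon x.1 x.2.2 % 2 = 1 - r :=
      x.2.1.2.1 _ (mNon_mem_ov x.1 x.2.2)
    omega
  · have := x.1.overlined_pos _ (mNon_mem_ov x.1 x.2.2)
    omega

noncomputable def eA (N r : ℕ) (hr : r ≤ 1) :
    {π : Overpartition (N + 1) // ∃ s, SptbarOCond 1 π s ∧ s % 2 = r ∧ 1 < s} ≃
      {ρ : Overpartition N // ParX (1 - r) ρ ∧ MinNon ρ} where
  toFun x := ⟨fA N r x, fA_mem N r hr x⟩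
  invFun x := ⟨gA N r x, gA_mem N r hr x⟩
  left_inv := by
    intro x
    apply Subtype.ext
    apply op_ext
    · show (mNon (fA N r x) _ + 1) ::ₘ (fA N r x).parts = x.1.parts
      rw [mNon_eq _ (fA_isMin N r x)]
      have h2 : 1 < sOf x.1 (ex_of x.2) := (sOf_P x.2).2
      have hcons : sOf x.1 (ex_of x.2) - 1 + 1 = sOf x.1 (ex_of x.2) := by omega
      rw [hcons]
      show sOf x.1 (ex_of x.2) ::ₘ x.1.parts.erase (sOf x.1 (ex_of x.2)) = x.1.parts
      exact Multiset.cons_erase (sOf_spec x.1 (ex_of x.2)).1.1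
    · show ((fA N r x).overlined).erase (mNon (fA N r x) _) = x.1.overlined
      rw [mNon_eq _ (fA_isMin N r x)]
      show (insert (sOf x.1 (ex_of x.2) - 1) x.1.overlined).erase
          (sOf x.1 (ex_of x.2) - 1) = x.1.overlined
      apply Finset.erase_insert
      intro hmem
      have hcond := sOf_spec x.1 (ex_of x.2)
      have := hcond.1.2.2.2 _ hmem
      omega
  right_inv := by
    intro x
    apply Subtype.ext
    apply op_ext
    · show ((gA N r x).parts).erase (sOf (gA N r x) _) = x.1.parts
      rw [sOf_eq _ (gA_cond N r hr x)]
      show ((mNon x.1 x.2.2 + 1) ::ₘ x.1.parts).erase (mNon x.1 x.2.2 + 1) = x.1.parts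
      exact Multiset.erase_cons_head _ _
    · show insert (sOf (gA N r x) _ - 1) ((gA N r x).overlined) = x.1.overlined
      rw [sOf_eq _ (gA_cond N r hr x)]
      show insert (mNon x.1 x.2.2 + 1 - 1) (x.1.overlined.erase (mNon x.1 x.2.2)) =
        x.1.overlined
      rw [Nat.add_sub_cancel]
      exact Finset.insert_erase (mNon_mem_ov x.1 x.2.2)

/-! ### The bijection for `A(M)` pieces into level `M + 1` -/

noncomputable def fB (M r : ℕ)
    (x : {π : Overpartition M // ∃ s, SptbarOCond 1 π s ∧ s % 2 = r}) :
    Overpartition (M + 1) where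
  parts := (sOf x.1 (ex_of x.2) + 1) ::ₘ x.1.parts.erase (sOf x.1 (ex_of x.2))
  overlined := x.1.overlined
  parts_pos := by
    intro y hy
    rcases Multiset.mem_cons.mp hy with rfl | hy
    · omega
    · exact x.1.parts_pos y (Multiset.mem_of_mem_erase hy)
  overlined_pos := x.1.overlined_pos
  sum_eq := by
    have hcond := sOf_spec x.1 (ex_of x.2)
    have hsum := cond_sum hcond.1.1
    rw [Multiset.sum_cons]
    omega

theorem fB_isMin (M r : ℕ)
    (x : {π : Overpartition M // ∃ s, SptbarOCond 1 π s ∧ s % 2 = r}) :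
    IsMin (fB M r x) (sOf x.1 (ex_of x.2) + 1) := by
  have hcond := sOf_spec x.1 (ex_of x.2)
  constructor
  · exact Or.inl (Multiset.mem_cons_self _ _)
  · rintro y (hy | hy)
    · rcases Multiset.mem_cons.mp hy with rfl | hy
      · exact le_refl _
      · have := (cond_mem_erase hcond y hy).1; omega
    · have := hcond.1.2.2.2 _ hy; omega

theorem fB_mem (M r : ℕ) (hr : r ≤ 1)
    (x : {π : Overpartition M // ∃ s, SptbarOCond 1 π s ∧ s % 2 = r}) :
    ParX (1 - r) (fB M r x) ∧ MinIn (fB M r x) := by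
  have hcond := sOf_spec x.1 (ex_of x.2)
  have hpar : sOf x.1 (ex_of x.2) % 2 = r := sOf_P x.2
  have h1 : 1 ≤ sOf x.1 (ex_of x.2) := cond_pos hcond
  refine ⟨⟨?_, ?_, ?_⟩, ?_⟩
  · intro y hy
    rcases Multiset.mem_cons.mp hy with rfl | hy
    · omega
    · have := (cond_mem_erase hcond y hy).2; omega
  · intro y hy
    have := hcond.2.2 y hy; omega
  · intro _ h1m
    rcases Multiset.mem_cons.mp h1m with h | h
    · omega
    · have := (cond_mem_erase hcond 1 h).1; omega
  · exact ⟨sOf x.1 (ex_of x.2) + 1, fB_isMin M r x, Multiset.mem_cons_self _ _⟩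

theorem mIn_ne_one (M r : ℕ) (hr : r ≤ 1)
    (x : {ρ : Overpartition (M + 1) // ParX (1 - r) ρ ∧ MinIn ρ}) :
    2 ≤ mIn x.1 x.2.2 := by
  have hmem : mIn x.1 x.2.2 ∈ x.1.parts := (mIn_spec x.1 x.2.2).2
  have hpos := x.1.parts_pos _ hmem
  have hpar : mIn x.1 x.2.2 % 2 = 1 - r := x.2.1.1 _ hmem
  have hne1 : mIn x.1 x.2.2 ≠ 1 := by
    intro h
    have h10 : (1 : ℕ) - r = 1 := by rw [← hpar, h]
    rw [h] at hmem
    exact x.2.1.2.2 h10 hmem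
  omega

noncomputable def gB (M r : ℕ) (hr : r ≤ 1)
    (x : {ρ : Overpartition (M + 1) // ParX (1 - r) ρ ∧ MinIn ρ}) :
    Overpartition M where
  parts := (mIn x.1 x.2.2 - 1) ::ₘ x.1.parts.erase (mIn x.1 x.2.2)
  overlined := x.1.overlined
  parts_pos := by
    intro y hy
    have h2 := mIn_ne_one M r hr x
    rcases Multiset.mem_cons.mp hy with rfl | hy
    · omega
    · exact x.1.parts_pos y (Multiset.mem_of_mem_erase hy)
  overlined_pos := x.1.overlined_pos
  sum_eq := by
    have h2 := mIn_ne_one M r hr x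
    have hsum := cond_sum (mIn_spec x.1 x.2.2).2
    rw [Multiset.sum_cons]
    omega

theorem gB_cond (M r : ℕ) (hr : r ≤ 1)
    (x : {ρ : Overpartition (M + 1) // ParX (1 - r) ρ ∧ MinIn ρ}) :
    SptbarOCond 1 (gB M r hr x) (mIn x.1 x.2.2 - 1) := by
  have hmin := (mIn_spec x.1 x.2.2).1
  have hmem : mIn x.1 x.2.2 ∈ x.1.parts := (mIn_spec x.1 x.2.2).2
  have h2 := mIn_ne_one M r hr x
  have hpm : mIn x.1 x.2.2 % 2 = 1 - r := x.2.1.1 _ hmem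
  have herase : ∀ y ∈ x.1.parts.erase (mIn x.1 x.2.2),
      mIn x.1 x.2.2 ≤ y ∧ y % 2 = 1 - r := by
    intro y hy
    have h3 : y ∈ x.1.parts := Multiset.mem_of_mem_erase hy
    exact ⟨hmin.2 y (Or.inl h3), x.2.1.1 y h3⟩
  have hov : ∀ y ∈ x.1.overlined, mIn x.1 x.2.2 ≤ y ∧ y % 2 = 1 - r := by
    intro y hy
    exact ⟨hmin.2 y (Or.inr hy), x.2.1.2.1 y hy⟩
  refine ⟨⟨Multiset.mem_cons_self _ _, ?_, ?_, ?_⟩, ?_, ?_⟩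
  · intro y hy
    rcases Multiset.mem_cons.mp hy with rfl | hy
    · exact le_refl _
    · have := (herase y hy).1; omega
  · show Multiset.count (mIn x.1 x.2.2 - 1)
      ((mIn x.1 x.2.2 - 1) ::ₘ x.1.parts.erase (mIn x.1 x.2.2)) = 1
    rw [Multiset.count_cons_self]
    have hnot : mIn x.1 x.2.2 - 1 ∉ x.1.parts.erase (mIn x.1 x.2.2) := by
      intro hc
      have := (herase _ hc).1
      omega
    rw [Multiset.count_eq_zero.mpr hnot]
  · intro y hy
    have := (hov y hy).1; omega
  · intro y hy hne
    rcases Multiset.mem_cons.mp hy with rfl | hy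
    · exact absurd rfl hne
    · have := (herase y hy).2; omega
  · intro y hy
    have := (hov y hy).2; omega

theorem gB_mem (M r : ℕ) (hr : r ≤ 1)
    (x : {ρ : Overpartition (M + 1) // ParX (1 - r) ρ ∧ MinIn ρ}) :
    ∃ s, SptbarOCond 1 (gB M r hr x) s ∧ s % 2 = r := by
  refine ⟨mIn x.1 x.2.2 - 1, gB_cond M r hr x, ?_⟩
  have h2 := mIn_ne_one M r hr x
  have hpm : mIn x.1 x.2.2 % 2 = 1 - r := x.2.1.1 _ (mIn_spec x.1 x.2.2).2
  omega

noncomputable def eB (M r : ℕ) (hr : r ≤ 1) :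
    {π : Overpartition M // ∃ s, SptbarOCond 1 π s ∧ s % 2 = r} ≃
      {ρ : Overpartition (M + 1) // ParX (1 - r) ρ ∧ MinIn ρ} where
  toFun x := ⟨fB M r x, fB_mem M r hr x⟩
  invFun x := ⟨gB M r hr x, gB_mem M r hr x⟩
  left_inv := by
    intro x
    apply Subtype.ext
    apply op_ext
    · show (mIn (fB M r x) _ - 1) ::ₘ ((fB M r x).parts).erase (mIn (fB M r x) _) =
        x.1.parts
      rw [mIn_eq _ (fB_isMin M r x)]
      show (sOf x.1 (ex_of x.2) + 1 - 1) ::ₘ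
        ((sOf x.1 (ex_of x.2) + 1) ::ₘ x.1.parts.erase (sOf x.1 (ex_of x.2))).erase
          (sOf x.1 (ex_of x.2) + 1) = x.1.parts
      rw [Nat.add_sub_cancel, Multiset.erase_cons_head]
      exact Multiset.cons_erase (sOf_spec x.1 (ex_of x.2)).1.1
    · rfl
  right_inv := by
    intro x
    apply Subtype.ext
    apply op_ext
    · show (sOf (gB M r hr x) _ + 1) ::ₘ ((gB M r hr x).parts).erase (sOf (gB M r hr x) _) =
        x.1.parts
      rw [sOf_eq _ (gB_cond M r hr x)]
      show (mIn x.1 x.2.2 - 1 + 1) ::ₘ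
        ((mIn x.1 x.2.2 - 1) ::ₘ x.1.parts.erase (mIn x.1 x.2.2)).erase
          (mIn x.1 x.2.2 - 1) = x.1.parts
      rw [Multiset.erase_cons_head]
      have h2 := mIn_ne_one M r hr x
      have : mIn x.1 x.2.2 - 1 + 1 = mIn x.1 x.2.2 := by omega
      rw [this]
      exact Multiset.cons_erase (mIn_spec x.1 x.2.2).2
    · rfl

/-! ### The bijection for the `s = 1` piece -/

noncomputable def e1 (N : ℕ) :
    {π : Overpartition (N + 1) // SptbarOCond 1 π 1} ≃
      {ρ : Overpartition N // ParX 0 ρ} where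
  toFun x := ⟨{ parts := x.1.parts.erase 1
                overlined := x.1.overlined
                parts_pos := fun y hy => x.1.parts_pos y (Multiset.mem_of_mem_erase hy)
                overlined_pos := x.1.overlined_pos
                sum_eq := by
                  have hsum := cond_sum x.2.1.1
                  omega }, by
    refine ⟨?_, ?_, ?_⟩
    · intro y hy
      have := (cond_mem_erase x.2 y hy).2; omega
    · intro y hy
      have := x.2.2.2 y hy
      omega
    · intro h; omega⟩
  invFun x := ⟨{ parts := 1 ::ₘ x.1.parts
                 overlined := x.1.overlined
                 parts_pos := by
                   intro y hy
                   rcases Multiset.mem_cons.mp hy with rfl | hy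
                   · omega
                   · exact x.1.parts_pos y hy
                 overlined_pos := x.1.overlined_pos
                 sum_eq := by
                   rw [Multiset.sum_cons]
                   have := x.1.sum_eq
                   omega }, by
    have hpp : ∀ y ∈ x.1.parts, y % 2 = 0 := x.2.1
    have hpo : ∀ y ∈ x.1.overlined, y % 2 = 0 := x.2.2.1
    refine ⟨⟨Multiset.mem_cons_self _ _, ?_, ?_, ?_⟩, ?_, ?_⟩
    · intro y hy
      rcases Multiset.mem_cons.mp hy with rfl | hy
      · exact le_refl _
      · exact x.1.parts_pos y hy
    · show Multiset.count 1 (1 ::ₘ x.1.parts) = 1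
      rw [Multiset.count_cons_self]
      have hnot : (1 : ℕ) ∉ x.1.parts := by
        intro hc
        have := hpp 1 hc; omega
      rw [Multiset.count_eq_zero.mpr hnot]
    · intro y hy
      have h1 := x.1.overlined_pos y hy
      have h2 := hpo y hy
      omega
    · intro y hy hne
      rcases Multiset.mem_cons.mp hy with rfl | hy
      · exact absurd rfl hne
      · have := hpp y hy; omega
    · intro y hy
      have := hpo y hy; omega⟩
  left_inv := by
    intro x
    apply Subtype.ext
    apply op_ext
    · exact Multiset.cons_erase x.2.1.1
    · rfl
  right_inv := by
    intro x
    apply Subtype.ext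
    apply op_ext
    · exact Multiset.erase_cons_head _ _
    · rfl

/-! ### Splitting lemmas for cardinalities -/

theorem cardA_split (m : ℕ) :
    Nat.card {π : Overpartition m // ∃ s, SptbarOCond 1 π s} =
      Nat.card {π : Overpartition m // SptbarOCond 1 π 1} +
        Nat.card {π : Overpartition m // ∃ s, SptbarOCond 1 π s ∧ s % 2 = 1 ∧ 1 < s} +
        Nat.card {π : Overpartition m // ∃ s, SptbarOCond 1 π s ∧ s % 2 = 0 ∧ 1 < s} := by
  rw [card_split (fun π : Overpartition m => ∃ s, SptbarOCond 1 π s)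
    (fun π => SptbarOCond 1 π 1)]
  rw [card_split (fun π : Overpartition m => (∃ s, SptbarOCond 1 π s) ∧ ¬SptbarOCond 1 π 1)
    (fun π => ∃ s, SptbarOCond 1 π s ∧ s % 2 = 1)]
  have h1 : Nat.card {π : Overpartition m // (∃ s, SptbarOCond 1 π s) ∧ SptbarOCond 1 π 1} =
      Nat.card {π : Overpartition m // SptbarOCond 1 π 1} := by
    apply Nat.card_congr
    apply Equiv.subtypeEquivRight
    intro π
    exact ⟨fun h => h.2, fun h => ⟨⟨1, h⟩, h⟩⟩
  have h2 : Nat.card {π : Overpartition m //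
      ((∃ s, SptbarOCond 1 π s) ∧ ¬SptbarOCond 1 π 1) ∧ ∃ s, SptbarOCond 1 π s ∧ s % 2 = 1} =
      Nat.card {π : Overpartition m // ∃ s, SptbarOCond 1 π s ∧ s % 2 = 1 ∧ 1 < s} := by
    apply Nat.card_congr
    apply Equiv.subtypeEquivRight
    intro π
    constructor
    · rintro ⟨⟨_, hn1⟩, s, hs, hodd⟩
      refine ⟨s, hs, hodd, ?_⟩
      have h1s : 1 ≤ s := cond_pos hs
      rcases Nat.lt_or_ge 1 s with h | h
      · exact h
      · have : s = 1 := by omega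
        rw [this] at hs
        exact absurd hs hn1
    · rintro ⟨s, hs, hodd, hlt⟩
      refine ⟨⟨⟨s, hs⟩, fun h1c => ?_⟩, s, hs, hodd⟩
      have := condO_unique hs h1c
      omega
  have h3 : Nat.card {π : Overpartition m //
      ((∃ s, SptbarOCond 1 π s) ∧ ¬SptbarOCond 1 π 1) ∧
        ¬∃ s, SptbarOCond 1 π s ∧ s % 2 = 1} =
      Nat.card {π : Overpartition m // ∃ s, SptbarOCond 1 π s ∧ s % 2 = 0 ∧ 1 < s} := by
    apply Nat.card_congr
    apply Equiv.subtypeEquivRight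
    intro π
    constructor
    · rintro ⟨⟨⟨s, hs⟩, hn1⟩, hno⟩
      have heven : s % 2 = 0 := by
        rcases Nat.mod_two_eq_zero_or_one s with h | h
        · exact h
        · exact absurd ⟨s, hs, h⟩ hno
      have h1s : 1 ≤ s := cond_pos hs
      exact ⟨s, hs, heven, by omega⟩
    · rintro ⟨s, hs, heven, hlt⟩
      refine ⟨⟨⟨s, hs⟩, fun h1c => ?_⟩, fun ⟨s', hs', hodd⟩ => ?_⟩
      · have := condO_unique hs h1c; omega
      · have := condO_unique hs hs'; omega
  omega

theorem cardA2_split (m : ℕ) :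
    Nat.card {π : Overpartition m // ∃ s, SptbarOCond 1 π s} =
      Nat.card {π : Overpartition m // ∃ s, SptbarOCond 1 π s ∧ s % 2 = 1} +
        Nat.card {π : Overpartition m // ∃ s, SptbarOCond 1 π s ∧ s % 2 = 0} := by
  rw [card_split (fun π : Overpartition m => ∃ s, SptbarOCond 1 π s)
    (fun π => ∃ s, SptbarOCond 1 π s ∧ s % 2 = 1)]
  have h1 : Nat.card {π : Overpartition m //
      (∃ s, SptbarOCond 1 π s) ∧ ∃ s, SptbarOCond 1 π s ∧ s % 2 = 1} =
      Nat.card {π : Overpartition m // ∃ s, SptbarOCond 1 π s ∧ s % 2 = 1} := by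
    apply Nat.card_congr
    apply Equiv.subtypeEquivRight
    intro π
    exact ⟨fun h => h.2, fun h => ⟨⟨h.choose, h.choose_spec.1⟩, h⟩⟩
  have h2 : Nat.card {π : Overpartition m //
      (∃ s, SptbarOCond 1 π s) ∧ ¬∃ s, SptbarOCond 1 π s ∧ s % 2 = 1} =
      Nat.card {π : Overpartition m // ∃ s, SptbarOCond 1 π s ∧ s % 2 = 0} := by
    apply Nat.card_congr
    apply Equiv.subtypeEquivRight
    intro π
    constructor
    · rintro ⟨⟨s, hs⟩, hno⟩
      have heven : s % 2 = 0 := by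
        rcases Nat.mod_two_eq_zero_or_one s with h | h
        · exact h
        · exact absurd ⟨s, hs, h⟩ hno
      exact ⟨s, hs, heven⟩
    · rintro ⟨s, hs, heven⟩
      exact ⟨⟨s, hs⟩, fun ⟨s', hs', hodd⟩ => by
        have := condO_unique hs hs'; omega⟩
  omega

theorem cardPar_split (m : ℕ) (hm : 0 < m) (c : ℕ) :
    Nat.card {ρ : Overpartition m // ParX c ρ} =
      Nat.card {ρ : Overpartition m // ParX c ρ ∧ MinIn ρ} +
        Nat.card {ρ : Overpartition m // ParX c ρ ∧ MinNon ρ} := by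
  rw [card_split (fun ρ : Overpartition m => ParX c ρ) (fun ρ => MinIn ρ)]
  congr 1
  apply Nat.card_congr
  apply Equiv.subtypeEquivRight
  intro ρ
  constructor
  · rintro ⟨hpar, hno⟩
    obtain ⟨a, ha⟩ := exists_isMin ρ hm
    refine ⟨hpar, a, ha, fun hmem => hno ⟨a, ha, hmem⟩⟩
  · rintro ⟨hpar, a, ha, hnp⟩
    refine ⟨hpar, fun ⟨b, hb, hbp⟩ => ?_⟩
    rw [isMin_unique hb ha] at hbp
    exact hnp hbp

end SptAux

open SptAux

/-- Corollary 4.2. -/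
theorem sptbarO_one_add (n : ℕ) (hn : 2 < n) :
    sptbarO 1 n + sptbarO 1 (n - 2) = 2 * pbarE (n - 1) + pbarOex (n - 1) := by
  have hN : n - 1 + 1 = n := by omega
  have hM : n - 2 + 1 = n - 1 := by omega
  have hpos : 0 < n - 1 := by omega
  have hE : pbarE (n - 1) = Nat.card {ρ : Overpartition (n - 1) // ParX 0 ρ} := by
    unfold pbarE
    apply Nat.card_congr
    apply Equiv.subtypeEquivRight
    intro ρ
    constructor
    · rintro ⟨h1, h2⟩
      exact ⟨fun y hy => Nat.even_iff.mp (h1 y hy),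
        fun y hy => Nat.even_iff.mp (h2 y hy), fun h => by omega⟩
    · rintro ⟨h1, h2, _⟩
      exact ⟨fun y hy => Nat.even_iff.mpr (h1 y hy),
        fun y hy => Nat.even_iff.mpr (h2 y hy)⟩
  have hO : pbarOex (n - 1) = Nat.card {ρ : Overpartition (n - 1) // ParX 1 ρ} := by
    unfold pbarOex
    apply Nat.card_congr
    apply Equiv.subtypeEquivRight
    intro ρ
    constructor
    · rintro ⟨h1, h2, h3⟩
      exact ⟨fun y hy => Nat.odd_iff.mp (h1 y hy),
        fun y hy => Nat.odd_iff.mp (h2 y hy), fun _ => h3⟩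
    · rintro ⟨h1, h2, h3⟩
      exact ⟨fun y hy => Nat.odd_iff.mpr (h1 y hy),
        fun y hy => Nat.odd_iff.mpr (h2 y hy), h3 rfl⟩
  have hA1 : sptbarO 1 n = Nat.card {π : Overpartition n // ∃ s, SptbarOCond 1 π s} := rfl
  have hA2 : sptbarO 1 (n - 2) =
      Nat.card {π : Overpartition (n - 2) // ∃ s, SptbarOCond 1 π s} := rfl
  have d1 := cardA_split n
  have d2 := cardA2_split (n - 2)
  have d3 := cardPar_split (n - 1) hpos 0
  have d4 := cardPar_split (n - 1) hpos 1
  have q1 : Nat.card {π : Overpartition n // SptbarOCond 1 π 1} =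
      Nat.card {ρ : Overpartition (n - 1) // ParX 0 ρ} := by
    have h := Nat.card_congr (e1 (n - 1))
    rwa [hN] at h
  have q2 : Nat.card {π : Overpartition n // ∃ s, SptbarOCond 1 π s ∧ s % 2 = 1 ∧ 1 < s} =
      Nat.card {ρ : Overpartition (n - 1) // ParX 0 ρ ∧ MinNon ρ} := by
    have h := Nat.card_congr (eA (n - 1) 1 (le_refl 1))
    rwa [hN] at h
  have q3 : Nat.card {π : Overpartition n // ∃ s, SptbarOCond 1 π s ∧ s % 2 = 0 ∧ 1 < s} =
      Nat.card {ρ : Overpartition (n - 1) // ParX 1 ρ ∧ MinNon ρ} := by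
    have h := Nat.card_congr (eA (n - 1) 0 (by omega))
    rwa [hN] at h
  have q4 : Nat.card {π : Overpartition (n - 2) // ∃ s, SptbarOCond 1 π s ∧ s % 2 = 1} =
      Nat.card {ρ : Overpartition (n - 1) // ParX 0 ρ ∧ MinIn ρ} := by
    have h := Nat.card_congr (eB (n - 2) 1 (le_refl 1))
    rwa [hM] at h
  have q5 : Nat.card {π : Overpartition (n - 2) // ∃ s, SptbarOCond 1 π s ∧ s % 2 = 0} =
      Nat.card {ρ : Overpartition (n - 1) // ParX 1 ρ ∧ MinIn ρ} := by
    have h := Nat.card_congr (eB (n - 2) 0 (by omega))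
    rwa [hM] at h
  omega
end

section
/- For every integer n > 2, sptbar_1_o'(n) + sptbar_1_o'(n−2) = −pbar_oex'(n−1), where pbar_oex'(m) is the number of overpartitions of m into odd parts with no non-overlined 1's having an even number of parts minus the number of such overpartitions having an odd number of parts. -/
open scoped BigOperators

/-! ### Auxiliary development for Corollary 4.3 -/

namespace Cor43

/-- Code for a `sptbarO`-type object: smallest non-overlined part `s`,
remaining non-overlined parts `M`, overlined parts `S`. -/
@[ext] structure BC where
  s : ℕ
  M : Multiset ℕ
  S : Finset ℕ

/-- Code for a `pbarOex`-type object. -/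
@[ext] structure PC where
  M : Multiset ℕ
  S : Finset ℕ

/-- Validity of a `BC` code for total `m`. -/
def BV (m : ℕ) (c : BC) : Prop :=
  0 < c.s ∧ (∀ x ∈ c.M, c.s < x ∧ x % 2 ≠ c.s % 2) ∧
    (∀ x ∈ c.S, c.s < x ∧ x % 2 ≠ c.s % 2) ∧
    c.s + c.M.sum + ∑ x ∈ c.S, x = m

/-- Validity of a `PC` code for total `m`. -/
def PV (m : ℕ) (c : PC) : Prop :=
  (∀ x ∈ c.M, 1 < x ∧ x % 2 = 1) ∧ (∀ x ∈ c.S, x % 2 = 1) ∧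
    c.M.sum + ∑ x ∈ c.S, x = m

def wt (c : BC) : ℕ := Multiset.card c.M + c.S.card
def wt' (c : PC) : ℕ := Multiset.card c.M + c.S.card

/-- The smallest element appearing in `M` or `S`. -/
noncomputable def minMS (M : Multiset ℕ) (S : Finset ℕ) : ℕ := sInf {x | x ∈ M ∨ x ∈ S}

lemma minMS_nonempty {M : Multiset ℕ} {S : Finset ℕ}
    (h : M.sum + ∑ x ∈ S, x ≠ 0) : {x | x ∈ M ∨ x ∈ S}.Nonempty := by
  by_contra hc
  rw [Set.not_nonempty_iff_eq_empty, Set.eq_empty_iff_forall_notMem] at hc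
  have hM : M = 0 := Multiset.eq_zero_of_forall_notMem fun x hx => hc x (Or.inl hx)
  have hS : S = ∅ := Finset.eq_empty_of_forall_notMem fun x hx => hc x (Or.inr hx)
  apply h; simp [hM, hS]

lemma minMS_mem {M : Multiset ℕ} {S : Finset ℕ}
    (h : {x | x ∈ M ∨ x ∈ S}.Nonempty) : minMS M S ∈ M ∨ minMS M S ∈ S :=
  Nat.sInf_mem h

lemma minMS_le {M : Multiset ℕ} {S : Finset ℕ} {x : ℕ} (hx : x ∈ M ∨ x ∈ S) :
    minMS M S ≤ x := Nat.sInf_le hx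

lemma minMS_eq {M : Multiset ℕ} {S : Finset ℕ} (b : ℕ) (hb : b ∈ M ∨ b ∈ S)
    (hlb : ∀ x, (x ∈ M ∨ x ∈ S) → b ≤ x) : minMS M S = b :=
  le_antisymm (Nat.sInf_le hb) (hlb _ (minMS_mem ⟨b, hb⟩))

/-- The combined universe. -/
abbrev R := BC ⊕ BC ⊕ PC

/-- Validity on the universe. -/
def VAL (n : ℕ) : R → Prop
  | .inl c => BV n c
  | .inr (.inl c) => BV (n - 2) c
  | .inr (.inr c) => PV (n - 1) c

/-- Weight (number of parts other than `s`, resp. all parts). -/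
def W : R → ℕ
  | .inl c => wt c
  | .inr (.inl c) => wt c
  | .inr (.inr c) => wt' c

/-- The sign-reversing involution. -/
noncomputable def phi : R → R
  | .inl c =>
    if c.s = 2 then .inr (.inr ⟨c.M, insert 1 c.S⟩)
    else if c.s = 1 then
      (if minMS c.M c.S ∈ c.M then
        .inr (.inl ⟨minMS c.M c.S - 1, c.M.erase (minMS c.M c.S), c.S⟩)
      else .inl ⟨minMS c.M c.S + 1, c.M, c.S.erase (minMS c.M c.S)⟩)
    else if c.s % 2 = 1 then .inl ⟨1, c.M, insert (c.s - 1) c.S⟩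
    else .inr (.inr ⟨c.M, insert (c.s - 1) c.S⟩)
  | .inr (.inl c) =>
    if c.s % 2 = 1 then .inl ⟨1, (c.s + 1) ::ₘ c.M, c.S⟩
    else .inr (.inr ⟨(c.s + 1) ::ₘ c.M, c.S⟩)
  | .inr (.inr c) =>
    if 1 ∈ c.S then .inl ⟨2, c.M, c.S.erase 1⟩
    else if minMS c.M c.S ∈ c.M then
      .inr (.inl ⟨minMS c.M c.S - 1, c.M.erase (minMS c.M c.S), c.S⟩)
    else .inl ⟨minMS c.M c.S + 1, c.M, c.S.erase (minMS c.M c.S)⟩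

lemma BV_mk {m s : ℕ} {M : Multiset ℕ} {S : Finset ℕ} (h1 : 0 < s)
    (h2 : ∀ x ∈ M, s < x ∧ x % 2 ≠ s % 2) (h3 : ∀ x ∈ S, s < x ∧ x % 2 ≠ s % 2)
    (h4 : s + M.sum + ∑ x ∈ S, x = m) : BV m ⟨s, M, S⟩ := ⟨h1, h2, h3, h4⟩

lemma PV_mk {m : ℕ} {M : Multiset ℕ} {S : Finset ℕ}
    (h1 : ∀ x ∈ M, 1 < x ∧ x % 2 = 1) (h2 : ∀ x ∈ S, x % 2 = 1)
    (h3 : M.sum + ∑ x ∈ S, x = m) : PV m ⟨M, S⟩ := ⟨h1, h2, h3⟩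

lemma moveA_spec {n p : ℕ} (hn : 2 < n) (hp : p ≤ 1) (M : Multiset ℕ) (S : Finset ℕ)
    (hM : ∀ x ∈ M, 1 < x ∧ x % 2 = p) (hS : ∀ x ∈ S, 1 < x ∧ x % 2 = p)
    (hsum : M.sum + ∑ x ∈ S, x = n - 1) (haM : minMS M S ∈ M) :
    BV (n - 2) ⟨minMS M S - 1, M.erase (minMS M S), S⟩ ∧
      Multiset.card (M.erase (minMS M S)) + 1 = Multiset.card M ∧
      phi (.inr (.inl ⟨minMS M S - 1, M.erase (minMS M S), S⟩)) =
        (if p = 0 then .inl ⟨1, M, S⟩ else .inr (.inr ⟨M, S⟩)) := by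
  obtain ⟨ha1, ha2⟩ := hM _ haM
  have hcons : minMS M S ::ₘ M.erase (minMS M S) = M := Multiset.cons_erase haM
  have hsumM : minMS M S + (M.erase (minMS M S)).sum = M.sum := by
    conv_rhs => rw [← hcons]
    rw [Multiset.sum_cons]
  have hcard : Multiset.card (M.erase (minMS M S)) + 1 = Multiset.card M := by
    have h := congrArg Multiset.card hcons
    rw [Multiset.card_cons] at h
    omega
  refine ⟨BV_mk (by omega) ?_ ?_ (by omega), hcard, ?_⟩
  · intro x hx
    have hx' : x ∈ M := Multiset.mem_of_mem_erase hx
    have h1 := hM x hx'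
    have h2 : minMS M S ≤ x := minMS_le (Or.inl hx')
    omega
  · intro x hx
    have h1 := hS x hx
    have h2 : minMS M S ≤ x := minMS_le (Or.inr hx)
    omega
  · interval_cases p
    · have hpar : (minMS M S - 1) % 2 = 1 := by omega
      have hc : minMS M S - 1 + 1 = minMS M S := by omega
      simp only [phi, hpar, if_pos rfl, reduceIte, hc, hcons]
    · have hpar : ¬((minMS M S - 1) % 2 = 1) := by omega
      have hc : minMS M S - 1 + 1 = minMS M S := by omega
      simp only [phi, hpar, reduceIte, hc, hcons]
      simp

lemma moveB_spec {n p : ℕ} (hn : 2 < n) (hp : p ≤ 1) (M : Multiset ℕ) (S : Finset ℕ)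
    (hM : ∀ x ∈ M, 1 < x ∧ x % 2 = p) (hS : ∀ x ∈ S, 1 < x ∧ x % 2 = p)
    (hsum : M.sum + ∑ x ∈ S, x = n - 1) (haM : minMS M S ∉ M) :
    minMS M S ∈ S ∧
      BV n ⟨minMS M S + 1, M, S.erase (minMS M S)⟩ ∧
      (S.erase (minMS M S)).card + 1 = S.card ∧
      phi (.inl ⟨minMS M S + 1, M, S.erase (minMS M S)⟩) =
        (if p = 0 then .inl ⟨1, M, S⟩ else .inr (.inr ⟨M, S⟩)) := by
  have hne : {x | x ∈ M ∨ x ∈ S}.Nonempty := minMS_nonempty (by omega)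
  have haS : minMS M S ∈ S := by
    rcases minMS_mem hne with h | h
    · exact absurd h haM
    · exact h
  obtain ⟨ha1, ha2⟩ := hS _ haS
  have hsumS : ∑ x ∈ S.erase (minMS M S), x + minMS M S = ∑ x ∈ S, x :=
    Finset.sum_erase_add S _ haS
  have hcard : (S.erase (minMS M S)).card + 1 = S.card := by
    have h1 := Finset.card_erase_of_mem haS
    have h2 : 0 < S.card := Finset.card_pos.2 ⟨_, haS⟩
    omega
  refine ⟨haS, BV_mk (by omega) ?_ ?_ (by omega), hcard, ?_⟩
  · intro x hx
    have h1 := hM x hx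
    have h2 : minMS M S ≤ x := minMS_le (Or.inl hx)
    have h3 : x ≠ minMS M S := fun h => haM (h ▸ hx)
    omega
  · intro x hx
    have hx' : x ≠ minMS M S ∧ x ∈ S := Finset.mem_erase.1 hx
    have h1 := hS x hx'.2
    have h2 : minMS M S ≤ x := minMS_le (Or.inr hx'.2)
    have h3 := hx'.1
    omega
  · have hne2 : ¬(minMS M S + 1 = 2) := by omega
    have hne1 : ¬(minMS M S + 1 = 1) := by omega
    have hc : minMS M S + 1 - 1 = minMS M S := by omega
    interval_cases p
    · have hpar : (minMS M S + 1) % 2 = 1 := by omega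
      simp only [phi, hne1, hne2, hpar, reduceIte, if_pos rfl, hc,
        Finset.insert_erase haS]
    · have hpar : ¬((minMS M S + 1) % 2 = 1) := by omega
      simp only [phi, hne1, hne2, hpar, reduceIte, hc, Finset.insert_erase haS]
      simp

theorem phi_spec {n : ℕ} (hn : 2 < n) (x : R) (hx : VAL n x) :
    VAL n (phi x) ∧ W (phi x) % 2 ≠ W x % 2 ∧ phi (phi x) = x := by
  rcases x with ⟨s, M, S⟩ | ⟨s, M, S⟩ | ⟨M, S⟩
  · -- x = .inl ⟨s, M, S⟩, a `B_n` object
    obtain ⟨hs, hM, hS, hsum⟩ :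
        0 < s ∧ (∀ x ∈ M, s < x ∧ x % 2 ≠ s % 2) ∧
          (∀ x ∈ S, s < x ∧ x % 2 ≠ s % 2) ∧ s + M.sum + ∑ x ∈ S, x = n := hx
    by_cases h2 : s = 2
    · -- case s = 2 : add an overlined 1, go to P
      subst h2
      have h1S : 1 ∉ S := fun h => by have := (hS 1 h).1; omega
      have e1 : phi (.inl ⟨2, M, S⟩) = .inr (.inr ⟨M, insert 1 S⟩) := by simp [phi]
      rw [e1]
      have hval : PV (n - 1) ⟨M, insert 1 S⟩ := by
        refine PV_mk ?_ ?_ ?_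
        · intro x hx'; have := hM x hx'; omega
        · intro x hx'
          rcases Finset.mem_insert.1 hx' with rfl | hx'
          · rfl
          · have := hS x hx'; omega
        · rw [Finset.sum_insert h1S]; omega
      refine ⟨hval, ?_, ?_⟩
      · show (Multiset.card M + (insert 1 S).card) % 2 ≠ (Multiset.card M + S.card) % 2
        rw [Finset.card_insert_of_notMem h1S]; omega
      · have e2 : phi (.inr (.inr ⟨M, insert 1 S⟩)) =
            .inl ⟨2, M, (insert 1 S).erase 1⟩ := by simp [phi]
        rw [e2, Finset.erase_insert h1S]
    · by_cases h1 : s = 1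
      · -- case s = 1 : act on the smallest element of M ∪ S
        subst h1
        have hM' : ∀ x ∈ M, 1 < x ∧ x % 2 = 0 := by
          intro x hx'; have := hM x hx'; omega
        have hS' : ∀ x ∈ S, 1 < x ∧ x % 2 = 0 := by
          intro x hx'; have := hS x hx'; omega
        have hsum' : M.sum + ∑ x ∈ S, x = n - 1 := by omega
        by_cases haM : minMS M S ∈ M
        · obtain ⟨hbv, hcard, hphi2⟩ :=
            moveA_spec hn (by omega) M S hM' hS' hsum' haM
          have e1 : phi (.inl ⟨1, M, S⟩) =
              .inr (.inl ⟨minMS M S - 1, M.erase (minMS M S), S⟩) := by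
            simp [phi, haM]
          rw [e1]
          refine ⟨hbv, ?_, ?_⟩
          · show (Multiset.card (M.erase (minMS M S)) + S.card) % 2 ≠
              (Multiset.card M + S.card) % 2
            omega
          · rw [hphi2]; simp
        · obtain ⟨haS, hbv, hcard, hphi2⟩ :=
            moveB_spec hn (by omega) M S hM' hS' hsum' haM
          have e1 : phi (.inl ⟨1, M, S⟩) =
              .inl ⟨minMS M S + 1, M, S.erase (minMS M S)⟩ := by
            simp [phi, haM]
          rw [e1]
          refine ⟨hbv, ?_, ?_⟩
          · show (Multiset.card M + (S.erase (minMS M S)).card) % 2 ≠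
              (Multiset.card M + S.card) % 2
            omega
          · rw [hphi2]; simp
      · -- case s ≥ 3 : move s - 1 into the overlined parts
        have hs3 : 3 ≤ s := by omega
        have hsm1S : s - 1 ∉ S := fun h => by have := (hS _ h).1; omega
        have hsm1M : s - 1 ∉ M := fun h => by have := (hM _ h).1; omega
        have hmin : minMS M (insert (s - 1) S) = s - 1 := by
          apply minMS_eq
          · exact Or.inr (Finset.mem_insert_self _ _)
          · intro x hx'
            rcases hx' with hx' | hx'
            · have := (hM x hx').1; omega
            · rcases Finset.mem_insert.1 hx' with rfl | hx'
              · omega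
              · have := (hS x hx').1; omega
        have hnm : minMS M (insert (s - 1) S) ∉ M := by rw [hmin]; exact hsm1M
        have hc : s - 1 + 1 = s := by omega
        rcases Nat.mod_two_eq_zero_or_one s with hpar | hpar
        · -- s even, ≥ 4 : go to P
          have e1 : phi (.inl ⟨s, M, S⟩) = .inr (.inr ⟨M, insert (s - 1) S⟩) := by
            simp [phi, h1, h2, hpar]
          rw [e1]
          have h1i : (1 : ℕ) ∉ insert (s - 1) S := by
            intro h
            rcases Finset.mem_insert.1 h with h | h
            · omega
            · have := (hS 1 h).1; omega
          have hval : PV (n - 1) ⟨M, insert (s - 1) S⟩ := by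
            refine PV_mk ?_ ?_ ?_
            · intro x hx'; have := hM x hx'; omega
            · intro x hx'
              rcases Finset.mem_insert.1 hx' with rfl | hx'
              · omega
              · have := hS x hx'; omega
            · rw [Finset.sum_insert hsm1S]; omega
          refine ⟨hval, ?_, ?_⟩
          · show (Multiset.card M + (insert (s - 1) S).card) % 2 ≠
              (Multiset.card M + S.card) % 2
            rw [Finset.card_insert_of_notMem hsm1S]; omega
          · have e2 : phi (.inr (.inr ⟨M, insert (s - 1) S⟩)) =
                .inl ⟨minMS M (insert (s - 1) S) + 1, M,
                  (insert (s - 1) S).erase (minMS M (insert (s - 1) S))⟩ := by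
              simp [phi, h1i, hnm]
            rw [e2, hmin, Finset.erase_insert hsm1S, hc]
        · -- s odd, ≥ 3 : stay in B_n with new s = 1
          have e1 : phi (.inl ⟨s, M, S⟩) = .inl ⟨1, M, insert (s - 1) S⟩ := by
            simp [phi, h1, h2, hpar]
          rw [e1]
          have hval : BV n ⟨1, M, insert (s - 1) S⟩ := by
            refine BV_mk (by omega) ?_ ?_ ?_
            · intro x hx'; have := hM x hx'; omega
            · intro x hx'
              rcases Finset.mem_insert.1 hx' with rfl | hx'
              · omega
              · have := hS x hx'; omega
            · rw [Finset.sum_insert hsm1S]; omega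
          refine ⟨hval, ?_, ?_⟩
          · show (Multiset.card M + (insert (s - 1) S).card) % 2 ≠
              (Multiset.card M + S.card) % 2
            rw [Finset.card_insert_of_notMem hsm1S]; omega
          · have e2 : phi (.inl ⟨1, M, insert (s - 1) S⟩) =
                .inl ⟨minMS M (insert (s - 1) S) + 1, M,
                  (insert (s - 1) S).erase (minMS M (insert (s - 1) S))⟩ := by
              simp [phi, hnm]
            rw [e2, hmin, Finset.erase_insert hsm1S, hc]
  · -- x = .inr (.inl ⟨s, M, S⟩), a `B_{n-2}` object : add the part s + 1
    obtain ⟨hs, hM, hS, hsum⟩ :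
        0 < s ∧ (∀ x ∈ M, s < x ∧ x % 2 ≠ s % 2) ∧
          (∀ x ∈ S, s < x ∧ x % 2 ≠ s % 2) ∧ s + M.sum + ∑ x ∈ S, x = n - 2 := hx
    have hmin : minMS ((s + 1) ::ₘ M) S = s + 1 := by
      apply minMS_eq
      · exact Or.inl (Multiset.mem_cons_self _ _)
      · intro x hx'
        rcases hx' with hx' | hx'
        · rcases Multiset.mem_cons.1 hx' with rfl | hx'
          · omega
          · have := (hM x hx').1; omega
        · have := (hS x hx').1; omega
    have hmem : (s + 1) ∈ (s + 1) ::ₘ M := Multiset.mem_cons_self _ _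
    have hmin' : minMS ((s + 1) ::ₘ M) S ∈ (s + 1) ::ₘ M := by rw [hmin]; exact hmem
    have hc : s + 1 - 1 = s := by omega
    rcases Nat.mod_two_eq_zero_or_one s with hpar | hpar
    · -- s even ≥ 2 : go to P
      have hs2 : 2 ≤ s := by omega
      have hpar' : ¬(s % 2 = 1) := by omega
      have e1 : phi (.inr (.inl ⟨s, M, S⟩)) = .inr (.inr ⟨(s + 1) ::ₘ M, S⟩) := by
        simp [phi, hpar']
      rw [e1]
      have hval : PV (n - 1) ⟨(s + 1) ::ₘ M, S⟩ := by
        refine PV_mk ?_ ?_ ?_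
        · intro x hx'
          rcases Multiset.mem_cons.1 hx' with rfl | hx'
          · omega
          · have := hM x hx'; omega
        · intro x hx'; have := hS x hx'; omega
        · rw [Multiset.sum_cons]; omega
      refine ⟨hval, ?_, ?_⟩
      · show (Multiset.card ((s + 1) ::ₘ M) + S.card) % 2 ≠
          (Multiset.card M + S.card) % 2
        rw [Multiset.card_cons]; omega
      · have h1S : (1 : ℕ) ∉ S := fun h => by have := (hS 1 h).1; omega
        have e2 : phi (.inr (.inr ⟨(s + 1) ::ₘ M, S⟩)) =
            .inr (.inl ⟨minMS ((s + 1) ::ₘ M) S - 1,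
              ((s + 1) ::ₘ M).erase (minMS ((s + 1) ::ₘ M) S), S⟩) := by
          simp [phi, h1S, hmin']
        rw [e2, hmin, hc, Multiset.erase_cons_head]
    · -- s odd : go to B_n with s = 1
      have e1 : phi (.inr (.inl ⟨s, M, S⟩)) = .inl ⟨1, (s + 1) ::ₘ M, S⟩ := by
        simp [phi, hpar]
      rw [e1]
      have hval : BV n ⟨1, (s + 1) ::ₘ M, S⟩ := by
        refine BV_mk (by omega) ?_ ?_ ?_
        · intro x hx'
          rcases Multiset.mem_cons.1 hx' with rfl | hx'
          · omega
          · have := hM x hx'; omega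
        · intro x hx'; have := hS x hx'; omega
        · rw [Multiset.sum_cons]; omega
      refine ⟨hval, ?_, ?_⟩
      · show (Multiset.card ((s + 1) ::ₘ M) + S.card) % 2 ≠
          (Multiset.card M + S.card) % 2
        rw [Multiset.card_cons]; omega
      · have e2 : phi (.inl ⟨1, (s + 1) ::ₘ M, S⟩) =
            .inr (.inl ⟨minMS ((s + 1) ::ₘ M) S - 1,
              ((s + 1) ::ₘ M).erase (minMS ((s + 1) ::ₘ M) S), S⟩) := by
          simp [phi, hmin']
        rw [e2, hmin, hc, Multiset.erase_cons_head]
  · -- x = .inr (.inr ⟨M, S⟩), a `P` object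
    obtain ⟨hM, hS, hsum⟩ :
        (∀ x ∈ M, 1 < x ∧ x % 2 = 1) ∧ (∀ x ∈ S, x % 2 = 1) ∧
          M.sum + ∑ x ∈ S, x = n - 1 := hx
    by_cases h1S : 1 ∈ S
    · -- overlined 1 present : remove it, go to B_n with s = 2
      have e1 : phi (.inr (.inr ⟨M, S⟩)) = .inl ⟨2, M, S.erase 1⟩ := by
        simp [phi, h1S]
      rw [e1]
      have hsumS : ∑ x ∈ S.erase 1, x + 1 = ∑ x ∈ S, x :=
        Finset.sum_erase_add S _ h1S
      have hval : BV n ⟨2, M, S.erase 1⟩ := by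
        refine BV_mk (by omega) ?_ ?_ (by omega)
        · intro x hx'; have := hM x hx'; omega
        · intro x hx'
          have hx'' : x ≠ 1 ∧ x ∈ S := Finset.mem_erase.1 hx'
          have := hS x hx''.2
          have := hx''.1
          omega
      refine ⟨hval, ?_, ?_⟩
      · show (Multiset.card M + (S.erase 1).card) % 2 ≠ (Multiset.card M + S.card) % 2
        have hc1 := Finset.card_erase_of_mem h1S
        have hc2 : 0 < S.card := Finset.card_pos.2 ⟨1, h1S⟩
        omega
      · have e2 : phi (.inl ⟨2, M, S.erase 1⟩) =
            .inr (.inr ⟨M, insert 1 (S.erase 1)⟩) := by simp [phi]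
        rw [e2, Finset.insert_erase h1S]
    · -- no overlined 1 : act on the smallest element of M ∪ S
      have hS' : ∀ x ∈ S, 1 < x ∧ x % 2 = 1 := by
        intro x hx'
        have h1 := hS x hx'
        have h2 : x ≠ 1 := fun h => h1S (h ▸ hx')
        omega
      by_cases haM : minMS M S ∈ M
      · obtain ⟨hbv, hcard, hphi2⟩ :=
          moveA_spec hn (le_refl 1) M S hM hS' hsum haM
        have e1 : phi (.inr (.inr ⟨M, S⟩)) =
            .inr (.inl ⟨minMS M S - 1, M.erase (minMS M S), S⟩) := by
          simp [phi, h1S, haM]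
        rw [e1]
        refine ⟨hbv, ?_, ?_⟩
        · show (Multiset.card (M.erase (minMS M S)) + S.card) % 2 ≠
            (Multiset.card M + S.card) % 2
          omega
        · rw [hphi2]; simp
      · obtain ⟨haS, hbv, hcard, hphi2⟩ :=
          moveB_spec hn (le_refl 1) M S hM hS' hsum haM
        have e1 : phi (.inr (.inr ⟨M, S⟩)) =
            .inl ⟨minMS M S + 1, M, S.erase (minMS M S)⟩ := by
          simp [phi, h1S, haM]
        rw [e1]
        refine ⟨hbv, ?_, ?_⟩
        · show (Multiset.card M + (S.erase (minMS M S)).card) % 2 ≠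
            (Multiset.card M + S.card) % 2
          omega
        · rw [hphi2]; simp

/-! ### Bijections with the overpartition subtypes -/

lemma op_ext {m : ℕ} {π₁ π₂ : Overpartition m} (h1 : π₁.parts = π₂.parts)
    (h2 : π₁.overlined = π₂.overlined) : π₁ = π₂ := by
  cases π₁; cases π₂; simp_all

/-- The overpartition associated with a `BC` code. -/
def toOverB {m : ℕ} (c : BC) (h : BV m c) : Overpartition m where
  parts := c.s ::ₘ c.M
  overlined := c.S
  parts_pos := by
    intro x hx
    rcases Multiset.mem_cons.1 hx with rfl | hx
    · exact h.1
    · have h1 := h.1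
      have := (h.2.1 x hx).1
      omega
  overlined_pos := by
    intro x hx
    have h1 := h.1
    have := (h.2.2.1 x hx).1
    omega
  sum_eq := by
    show (c.s ::ₘ c.M).sum + ∑ x ∈ c.S, x = m
    rw [Multiset.sum_cons]
    have := h.2.2.2
    omega

lemma toOverB_cond {m : ℕ} (c : BC) (h : BV m c) :
    SptbarOCond 1 (toOverB c h) c.s ∧ numGreater (toOverB c h) c.s = wt c := by
  obtain ⟨h1, h2, h3, h4⟩ := h
  have hsM : c.s ∉ c.M := fun hm => by have := (h2 _ hm).1; omega
  constructor
  · refine ⟨⟨Multiset.mem_cons_self _ _, ?_, ?_, ?_⟩, ?_, ?_⟩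
    · intro x hx
      rcases Multiset.mem_cons.1 hx with rfl | hx
      · exact le_refl _
      · exact le_of_lt (h2 x hx).1
    · show (c.s ::ₘ c.M).count c.s = 1
      rw [Multiset.count_cons_self, Multiset.count_eq_zero.2 hsM]
    · intro x hx; exact (h3 x hx).1
    · intro x hx hne
      rcases Multiset.mem_cons.1 hx with rfl | hx
      · exact absurd rfl hne
      · exact (h2 x hx).2
    · intro x hx; exact (h3 x hx).2
  · show ((c.s ::ₘ c.M).filter (fun x => c.s < x)).card + c.S.card =
      Multiset.card c.M + c.S.card
    rw [Multiset.filter_cons_of_neg _ (lt_irrefl c.s),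
      Multiset.filter_eq_self.2 (fun x hx => (h2 x hx).1)]

lemma overB_code {m : ℕ} (π : Overpartition m) (s : ℕ) (h : SptbarOCond 1 π s) :
    ∃ (c : BC) (hc : BV m c), toOverB c hc = π ∧ c.s = s ∧ wt c = numGreater π s := by
  obtain ⟨⟨hmem, hle, hcount, holt⟩, hpar, hparo⟩ := h
  have hcons : s ::ₘ π.parts.erase s = π.parts := Multiset.cons_erase hmem
  have hsE : s ∉ π.parts.erase s := by
    have hc0 : (π.parts.erase s).count s = 0 := by
      rw [Multiset.count_erase_self, hcount]
    exact Multiset.count_eq_zero.1 hc0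
  have hE : ∀ x ∈ π.parts.erase s, s < x ∧ x % 2 ≠ s % 2 := by
    intro x hx
    have hxp : x ∈ π.parts := Multiset.mem_of_mem_erase hx
    have hxs : x ≠ s := fun he => hsE (he ▸ hx)
    exact ⟨lt_of_le_of_ne (hle x hxp) (Ne.symm hxs), hpar x hxp hxs⟩
  have hS : ∀ x ∈ π.overlined, s < x ∧ x % 2 ≠ s % 2 :=
    fun x hx => ⟨holt x hx, hparo x hx⟩
  have hspos : 0 < s := π.parts_pos s hmem
  have hsum : s + (π.parts.erase s).sum + ∑ x ∈ π.overlined, x = m := by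
    have hh1 := π.sum_eq
    have hh2 : s + (π.parts.erase s).sum = π.parts.sum := by
      conv_rhs => rw [← hcons]
      rw [Multiset.sum_cons]
    omega
  refine ⟨⟨s, π.parts.erase s, π.overlined⟩, ⟨hspos, hE, hS, hsum⟩, ?_, rfl, ?_⟩
  · exact op_ext hcons rfl
  · show Multiset.card (π.parts.erase s) + π.overlined.card =
      (π.parts.filter (fun x => s < x)).card + π.overlined.card
    congr 1
    conv_rhs => rw [← hcons]
    rw [Multiset.filter_cons_of_neg _ (lt_irrefl s),
      Multiset.filter_eq_self.2 (fun x hx => (hE x hx).1)]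

lemma cardB (m : ℕ) (p : ℕ → Prop) :
    Nat.card {π : Overpartition m // ∃ s, SptbarOCond 1 π s ∧ p (numGreater π s)} =
      Nat.card {c : BC // BV m c ∧ p (wt c)} := by
  refine (Nat.card_congr (Equiv.ofBijective
    (fun c : {c : BC // BV m c ∧ p (wt c)} =>
      (⟨toOverB c.1 c.2.1, c.1.s, (toOverB_cond c.1 c.2.1).1, by
        rw [(toOverB_cond c.1 c.2.1).2]; exact c.2.2⟩ :
        {π : Overpartition m // ∃ s, SptbarOCond 1 π s ∧ p (numGreater π s)}))
    ⟨?_, ?_⟩)).symm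
  · rintro ⟨⟨s₁, M₁, S₁⟩, hv₁, hp₁⟩ ⟨⟨s₂, M₂, S₂⟩, hv₂, hp₂⟩ hf
    have h := congrArg Subtype.val hf
    have hparts : s₁ ::ₘ M₁ = s₂ ::ₘ M₂ := congrArg Overpartition.parts h
    have hover : S₁ = S₂ := congrArg Overpartition.overlined h
    have hs : s₁ = s₂ := by
      have h1 : s₁ ∈ s₂ ::ₘ M₂ := by rw [← hparts]; exact Multiset.mem_cons_self _ _
      have h2 : s₂ ∈ s₁ ::ₘ M₁ := by rw [hparts]; exact Multiset.mem_cons_self _ _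
      rcases Multiset.mem_cons.1 h1 with h' | h'
      · exact h'
      · have hlt1 : s₂ < s₁ := (hv₂.2.1 _ h').1
        rcases Multiset.mem_cons.1 h2 with h'' | h''
        · exact h''.symm
        · have hlt2 : s₁ < s₂ := (hv₁.2.1 _ h'').1
          omega
    subst hs
    have hM : M₁ = M₂ := by rwa [Multiset.cons_inj_right] at hparts
    subst hM; subst hover
    rfl
  · rintro ⟨π, s, hcond, hp⟩
    obtain ⟨c, hc, heq, hcs, hwt⟩ := overB_code π s hcond
    refine ⟨⟨c, hc, ?_⟩, Subtype.ext heq⟩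
    rw [hwt]
    exact hp

/-- The overpartition associated with a `PC` code. -/
def toOverP {m : ℕ} (c : PC) (h : PV m c) : Overpartition m where
  parts := c.M
  overlined := c.S
  parts_pos := by intro x hx; have := (h.1 x hx).1; omega
  overlined_pos := by intro x hx; have := h.2.1 x hx; omega
  sum_eq := h.2.2

lemma cardP (m : ℕ) (p : ℕ → Prop) :
    Nat.card {π : Overpartition m // ((∀ x ∈ π.parts, Odd x) ∧
        (∀ x ∈ π.overlined, Odd x) ∧ (1 : ℕ) ∉ π.parts) ∧ p (numParts π)} =
      Nat.card {c : PC // PV m c ∧ p (wt' c)} := by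
  refine (Nat.card_congr (Equiv.ofBijective
    (fun c : {c : PC // PV m c ∧ p (wt' c)} =>
      (⟨toOverP c.1 c.2.1, ⟨?_, ?_, ?_⟩, c.2.2⟩ :
        {π : Overpartition m // ((∀ x ∈ π.parts, Odd x) ∧
          (∀ x ∈ π.overlined, Odd x) ∧ (1 : ℕ) ∉ π.parts) ∧ p (numParts π)}))
    ⟨?_, ?_⟩)).symm
  · intro x hx
    have := (c.2.1.1 x hx).2
    rw [Nat.odd_iff]; exact this
  · intro x hx
    have := c.2.1.2.1 x hx
    rw [Nat.odd_iff]; exact this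
  · intro h1
    have := (c.2.1.1 1 h1).1
    omega
  · rintro ⟨⟨M₁, S₁⟩, hv₁, hp₁⟩ ⟨⟨M₂, S₂⟩, hv₂, hp₂⟩ hf
    have h := congrArg Subtype.val hf
    have hparts : M₁ = M₂ := congrArg Overpartition.parts h
    have hover : S₁ = S₂ := congrArg Overpartition.overlined h
    subst hparts; subst hover
    rfl
  · rintro ⟨π, ⟨hodd, hoddo, h1p⟩, hp⟩
    have hpv : PV m ⟨π.parts, π.overlined⟩ := by
      refine ⟨?_, ?_, π.sum_eq⟩
      · intro x hx
        have h1 := (Nat.odd_iff).1 (hodd x hx)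
        have h2 : x ≠ 1 := fun he => h1p (he ▸ hx)
        have h3 := π.parts_pos x hx
        omega
      · intro x hx
        exact (Nat.odd_iff).1 (hoddo x hx)
    exact ⟨⟨⟨π.parts, π.overlined⟩, hpv, hp⟩, Subtype.ext (op_ext rfl rfl)⟩

/-! ### Finiteness -/

lemma card_le_sum {M : Multiset ℕ} (h : ∀ x ∈ M, 0 < x) : Multiset.card M ≤ M.sum := by
  induction M using Multiset.induction_on with
  | empty => simp
  | cons a t ih =>
    simp only [Multiset.card_cons, Multiset.sum_cons]
    have ha := h a (Multiset.mem_cons_self _ _)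
    have ht := ih (fun x hx => h x (Multiset.mem_cons_of_mem hx))
    omega

lemma finite_msets (m : ℕ) :
    {M : Multiset ℕ | (∀ x ∈ M, 0 < x) ∧ M.sum ≤ m}.Finite := by
  apply ((m • Multiset.range (m + 1)).powerset.toFinset.finite_toSet).subset
  intro M hM
  obtain ⟨hpos, hsum⟩ := hM
  simp only [Finset.mem_coe, Multiset.mem_toFinset, Multiset.mem_powerset]
  rw [Multiset.le_iff_count]
  intro a
  rw [Multiset.count_nsmul]
  by_cases ha : a < m + 1
  · have h1 : Multiset.count a (Multiset.range (m + 1)) = 1 := by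
      apply le_antisymm
      · exact Multiset.nodup_iff_count_le_one.1 (Multiset.nodup_range _) a
      · exact Multiset.one_le_count_iff_mem.2 (Multiset.mem_range.2 ha)
    rw [h1, mul_one]
    calc Multiset.count a M ≤ Multiset.card M := Multiset.count_le_card a M
      _ ≤ M.sum := card_le_sum hpos
      _ ≤ m := hsum
  · have h0 : a ∉ M := by
      intro hmem
      have h1 : a ≤ M.sum := Multiset.single_le_sum (fun x _ => Nat.zero_le x) a hmem
      omega
    rw [Multiset.count_eq_zero.2 h0]
    exact Nat.zero_le _

lemma finite_fsets (m : ℕ) : {S : Finset ℕ | ∑ x ∈ S, x ≤ m}.Finite := by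
  apply ((Finset.range (m + 1)).powerset.finite_toSet).subset
  intro S hS
  simp only [Set.mem_setOf_eq] at hS
  simp only [Finset.mem_coe, Finset.mem_powerset]
  intro x hx
  have hxle : x ≤ ∑ y ∈ S, y := Finset.single_le_sum (fun i _ => Nat.zero_le i) hx
  exact Finset.mem_range.2 (by omega)

lemma finite_BV (m : ℕ) : {c : BC | BV m c}.Finite := by
  have hinj : Function.Injective (fun c : BC => (c.s, c.M, c.S)) := by
    rintro ⟨s₁, M₁, S₁⟩ ⟨s₂, M₂, S₂⟩ h
    simp only [Prod.mk.injEq] at h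
    obtain ⟨h1, h2, h3⟩ := h
    subst h1; subst h2; subst h3; rfl
  have hfin : ((Set.Iic m) ×ˢ
      ({M : Multiset ℕ | (∀ x ∈ M, 0 < x) ∧ M.sum ≤ m} ×ˢ
        {S : Finset ℕ | ∑ x ∈ S, x ≤ m})).Finite :=
    (Set.finite_Iic m).prod ((finite_msets m).prod (finite_fsets m))
  apply (hfin.preimage (Set.injOn_of_injective hinj)).subset
  rintro ⟨s, M, S⟩ ⟨h1, h2, h3, h4⟩
  have h4' : s + M.sum + ∑ x ∈ S, x = m := h4
  refine ⟨?_, ⟨?_, ?_⟩, ?_⟩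
  · show s ≤ m; omega
  · exact fun x hx => by have := (h2 x hx).1; omega
  · show M.sum ≤ m; omega
  · show ∑ x ∈ S, x ≤ m; omega

lemma finite_PV (m : ℕ) : {c : PC | PV m c}.Finite := by
  have hinj : Function.Injective (fun c : PC => (c.M, c.S)) := by
    rintro ⟨M₁, S₁⟩ ⟨M₂, S₂⟩ h
    simp only [Prod.mk.injEq] at h
    obtain ⟨h1, h2⟩ := h
    subst h1; subst h2; rfl
  have hfin : (({M : Multiset ℕ | (∀ x ∈ M, 0 < x) ∧ M.sum ≤ m} ×ˢ
      {S : Finset ℕ | ∑ x ∈ S, x ≤ m})).Finite :=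
    (finite_msets m).prod (finite_fsets m)
  apply (hfin.preimage (Set.injOn_of_injective hinj)).subset
  rintro ⟨M, S⟩ ⟨h1, h2, h3⟩
  have h3' : M.sum + ∑ x ∈ S, x = m := h3
  refine ⟨?_, ?_⟩
  · exact ⟨fun x hx => by have := (h1 x hx).1; omega, by show M.sum ≤ m; omega⟩
  · show ∑ x ∈ S, x ≤ m; omega

lemma finB (m : ℕ) (p : ℕ → Prop) : Finite {c : BC // BV m c ∧ p (wt c)} :=
  ((finite_BV m).subset (fun c hc => hc.1)).to_subtype

lemma finP (m : ℕ) (p : ℕ → Prop) : Finite {c : PC // PV m c ∧ p (wt' c)} :=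
  ((finite_PV m).subset (fun c hc => hc.1)).to_subtype

/-! ### Assembly -/

def decompose (n : ℕ) (p : ℕ → Prop) :
    {x : R // VAL n x ∧ p (W x)} ≃
      ({c : BC // BV n c ∧ p (wt c)} ⊕ {c : BC // BV (n - 2) c ∧ p (wt c)} ⊕
        {c : PC // PV (n - 1) c ∧ p (wt' c)}) where
  toFun := fun x => match x with
    | ⟨.inl c, h⟩ => .inl ⟨c, h⟩
    | ⟨.inr (.inl c), h⟩ => .inr (.inl ⟨c, h⟩)
    | ⟨.inr (.inr c), h⟩ => .inr (.inr ⟨c, h⟩)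
  invFun := fun x => match x with
    | .inl ⟨c, h⟩ => ⟨.inl c, h⟩
    | .inr (.inl ⟨c, h⟩) => ⟨.inr (.inl c), h⟩
    | .inr (.inr ⟨c, h⟩) => ⟨.inr (.inr c), h⟩
  left_inv := by rintro ⟨(c | c | c), h⟩ <;> rfl
  right_inv := by rintro ((⟨c, h⟩) | (⟨c, h⟩) | (⟨c, h⟩)) <;> rfl

noncomputable def flipEquiv (n : ℕ) (hn : 2 < n) :
    {x : R // VAL n x ∧ Even (W x)} ≃ {x : R // VAL n x ∧ Odd (W x)} where
  toFun := fun x => ⟨phi x.1, (phi_spec hn x.1 x.2.1).1, by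
    have hne := (phi_spec hn x.1 x.2.1).2.1
    have he := x.2.2
    rw [Nat.even_iff] at he
    rw [Nat.odd_iff]
    omega⟩
  invFun := fun x => ⟨phi x.1, (phi_spec hn x.1 x.2.1).1, by
    have hne := (phi_spec hn x.1 x.2.1).2.1
    have ho := x.2.2
    rw [Nat.odd_iff] at ho
    rw [Nat.even_iff]
    omega⟩
  left_inv := fun x => Subtype.ext (phi_spec hn x.1 x.2.1).2.2
  right_inv := fun x => Subtype.ext (phi_spec hn x.1 x.2.1).2.2

lemma key (n : ℕ) (hn : 2 < n) :
    Nat.card {c : BC // BV n c ∧ Even (wt c)} +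
      Nat.card {c : BC // BV (n - 2) c ∧ Even (wt c)} +
      Nat.card {c : PC // PV (n - 1) c ∧ Even (wt' c)} =
    Nat.card {c : BC // BV n c ∧ Odd (wt c)} +
      Nat.card {c : BC // BV (n - 2) c ∧ Odd (wt c)} +
      Nat.card {c : PC // PV (n - 1) c ∧ Odd (wt' c)} := by
  haveI i1 := finB n (fun k => Even k)
  haveI i2 := finB (n - 2) (fun k => Even k)
  haveI i3 := finP (n - 1) (fun k => Even k)
  haveI i4 := finB n (fun k => Odd k)
  haveI i5 := finB (n - 2) (fun k => Odd k)
  haveI i6 := finP (n - 1) (fun k => Odd k)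
  have he : Nat.card {c : BC // BV n c ∧ Even (wt c)} +
      (Nat.card {c : BC // BV (n - 2) c ∧ Even (wt c)} +
        Nat.card {c : PC // PV (n - 1) c ∧ Even (wt' c)}) =
      Nat.card ({c : BC // BV n c ∧ Even (wt c)} ⊕
        ({c : BC // BV (n - 2) c ∧ Even (wt c)} ⊕
          {c : PC // PV (n - 1) c ∧ Even (wt' c)})) := by
    rw [Nat.card_sum, Nat.card_sum]
  have ho : Nat.card {c : BC // BV n c ∧ Odd (wt c)} +
      (Nat.card {c : BC // BV (n - 2) c ∧ Odd (wt c)} +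
        Nat.card {c : PC // PV (n - 1) c ∧ Odd (wt' c)}) =
      Nat.card ({c : BC // BV n c ∧ Odd (wt c)} ⊕
        ({c : BC // BV (n - 2) c ∧ Odd (wt c)} ⊕
          {c : PC // PV (n - 1) c ∧ Odd (wt' c)})) := by
    rw [Nat.card_sum, Nat.card_sum]
  have hmid : Nat.card ({c : BC // BV n c ∧ Even (wt c)} ⊕
        ({c : BC // BV (n - 2) c ∧ Even (wt c)} ⊕
          {c : PC // PV (n - 1) c ∧ Even (wt' c)})) =
      Nat.card ({c : BC // BV n c ∧ Odd (wt c)} ⊕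
        ({c : BC // BV (n - 2) c ∧ Odd (wt c)} ⊕
          {c : PC // PV (n - 1) c ∧ Odd (wt' c)})) := by
    refine Nat.card_congr ?_
    exact (decompose n (fun k => Even k)).symm.trans
      ((flipEquiv n hn).trans (decompose n (fun k => Odd k)))
  omega

end Cor43


/-- Corollary 4.3. -/
theorem sptbarO'_one_add (n : ℕ) (hn : 2 < n) :
    sptbarO' 1 n + sptbarO' 1 (n - 2) = -pbarOex' (n - 1) := by
  unfold sptbarO' pbarOex'
  rw [Cor43.cardB n (fun k => Even k), Cor43.cardB n (fun k => Odd k),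
    Cor43.cardB (n - 2) (fun k => Even k), Cor43.cardB (n - 2) (fun k => Odd k),
    Cor43.cardP (n - 1) (fun k => Even k), Cor43.cardP (n - 1) (fun k => Odd k)]
  have hk := Cor43.key n hn
  push_cast
  omega
end

section
/- For every positive integer k and every complex number q with |q| < 1: sum over n ≥ 1 of sptk_d(n) q^n = P_k(q)·(-q;q)_∞ + (-1)^k (q;q)_{k-1}, where P_1(q) = 1 and P_k(q) = (q^{k-1} − 1) P_{k-1}(q) + q^{k-1} for k > 1. -/
open scoped BigOperators

/-- `P q 1 = 1` and `P q k = (q^(k-1) - 1) * P q (k-1) + q^(k-1)` for `k > 1`. -/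
noncomputable def Pkd (q : ℂ) : ℕ → ℂ
  | 0 => 0
  | 1 => 1
  | (k + 2) => (q ^ (k + 1) - 1) * Pkd q (k + 1) + q ^ (k + 1)

namespace SptkdAux

/-- Finsets all of whose elements are greater than `s`. -/
abbrev Ts (s : ℕ) := {S : Finset ℕ // ∀ x ∈ S, s < x}

noncomputable def A (q : ℂ) (s : ℕ) : ℂ := ∑' S : Ts s, q ^ (∑ x ∈ S.1, x)

lemma prod_one_add_pow {R : Type*} [CommRing R] (x : R) (w : ℕ → ℕ) (U : Finset ℕ) :
    ∏ j ∈ U, (1 + x ^ w j) = ∑ S ∈ U.powerset, x ^ (∑ j ∈ S, w j) := by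
  have h := Finset.prod_add (fun j => x ^ w j) (fun _ => (1 : R)) U
  simp only [Finset.prod_const_one, mul_one] at h
  calc ∏ j ∈ U, (1 + x ^ w j) = ∏ j ∈ U, (x ^ w j + 1) := by
        simp [add_comm]
    _ = ∑ S ∈ U.powerset, ∏ j ∈ S, x ^ w j := h
    _ = ∑ S ∈ U.powerset, x ^ (∑ j ∈ S, w j) := by
        refine Finset.sum_congr rfl fun S _ => ?_
        rw [Finset.prod_pow_eq_pow_sum]

lemma sum_pow_tail_le {r : ℝ} (hr0 : 0 ≤ r) (hr1 : r < 1) (s : ℕ) (V : Finset ℕ)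
    (hV : ∀ j ∈ V, s ≤ j) : ∑ j ∈ V, r ^ j ≤ r ^ s * (1 - r)⁻¹ := by
  have hsumg : Summable (fun i : ℕ => r ^ s * r ^ i) :=
    (summable_geometric_of_lt_one hr0 hr1).mul_left _
  have h1 : ∑ j ∈ V, r ^ j = ∑ i ∈ V.image (fun j => j - s), (r ^ s * r ^ i) := by
    rw [Finset.sum_image (by intro a ha b hb hab; have := hV a ha; have := hV b hb; simp only at hab; omega)]
    refine Finset.sum_congr rfl fun j hj => ?_
    rw [← pow_add]
    congr 1
    have := hV j hj
    omega
  rw [h1]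
  calc ∑ i ∈ V.image (fun j => j - s), (r ^ s * r ^ i)
      ≤ ∑' i : ℕ, r ^ s * r ^ i := by
        refine Summable.sum_le_tsum _ (fun i _ => by positivity) hsumg
    _ = r ^ s * (1 - r)⁻¹ := by
        rw [tsum_mul_left, tsum_geometric_of_lt_one hr0 hr1]

lemma sum_pow_le {r : ℝ} (hr0 : 0 ≤ r) (hr1 : r < 1) (s : ℕ) (u : Finset (Finset ℕ))
    (hu : ∀ S ∈ u, ∀ x ∈ S, s ≤ x) :
    ∑ S ∈ u, r ^ (∑ x ∈ S, x) ≤ Real.exp (r ^ s * (1 - r)⁻¹) := by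
  set V : Finset ℕ := u.sup id with hVdef
  have hsub : ∀ S ∈ u, S ⊆ V := fun S hS => Finset.le_sup (f := id) hS
  have hV : ∀ x ∈ V, s ≤ x := by
    intro x hx
    rw [hVdef, Finset.mem_sup] at hx
    obtain ⟨S, hS, hxS⟩ := hx
    exact hu S hS x hxS
  calc ∑ S ∈ u, r ^ (∑ x ∈ S, x)
      ≤ ∑ S ∈ V.powerset, r ^ (∑ x ∈ S, x) := by
        refine Finset.sum_le_sum_of_subset_of_nonneg ?_ (fun S _ _ => by positivity)
        intro S hS
        exact Finset.mem_powerset.2 (hsub S hS)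
    _ = ∏ j ∈ V, (1 + r ^ j) := by
        rw [prod_one_add_pow r (fun j => j) V]
    _ ≤ ∏ j ∈ V, Real.exp (r ^ j) := by
        refine Finset.prod_le_prod (fun j _ => by positivity) (fun j _ => ?_)
        have := Real.add_one_le_exp (r ^ j)
        linarith
    _ = Real.exp (∑ j ∈ V, r ^ j) := (Real.exp_sum V _).symm
    _ ≤ Real.exp (r ^ s * (1 - r)⁻¹) :=
        Real.exp_le_exp.2 (sum_pow_tail_le hr0 hr1 s V hV)

lemma summable_finsets {r : ℝ} (hr0 : 0 ≤ r) (hr1 : r < 1) :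
    Summable (fun S : Finset ℕ => r ^ (∑ x ∈ S, x)) := by
  exact summable_of_sum_le (c := Real.exp (r ^ 0 * (1 - r)⁻¹)) (fun S => by positivity)
    (fun u => sum_pow_le hr0 hr1 0 u (fun S _ x _ => Nat.zero_le x))

lemma summable_Ts_real {r : ℝ} (hr0 : 0 ≤ r) (hr1 : r < 1) (t : ℕ) :
    Summable (fun S : Ts t => r ^ (∑ x ∈ S.1, x)) :=
  (summable_finsets hr0 hr1).comp_injective Subtype.val_injective

lemma summable_Ts {q : ℂ} (hq : ‖q‖ < 1) (t : ℕ) :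
    Summable (fun S : Ts t => q ^ (∑ x ∈ S.1, x)) := by
  refine Summable.of_norm ?_
  simpa [norm_pow] using summable_Ts_real (norm_nonneg q) hq t

lemma tsum_Ts_real_le {r : ℝ} (hr0 : 0 ≤ r) (hr1 : r < 1) (t : ℕ) :
    ∑' S : Ts t, r ^ (∑ x ∈ S.1, x) ≤ Real.exp (r ^ (t + 1) * (1 - r)⁻¹) := by
  refine Summable.tsum_le_of_sum_le (summable_Ts_real hr0 hr1 t) (fun u => ?_)
  have h1 : ∑ S ∈ u, r ^ (∑ x ∈ S.1, x)
      = ∑ S ∈ u.image Subtype.val, r ^ (∑ x ∈ S, x) := by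
    rw [Finset.sum_image (fun a _ b _ h => Subtype.val_injective h)]
  rw [h1]
  refine sum_pow_le hr0 hr1 (t + 1) _ ?_
  intro S hS x hx
  rw [Finset.mem_image] at hS
  obtain ⟨⟨S', hS'⟩, _, rfl⟩ := hS
  exact hS' x hx

lemma one_le_tsum_Ts_real {r : ℝ} (hr0 : 0 ≤ r) (hr1 : r < 1) (t : ℕ) :
    1 ≤ ∑' S : Ts t, r ^ (∑ x ∈ S.1, x) := by
  have := Summable.le_tsum (summable_Ts_real hr0 hr1 t) ⟨∅, by simp⟩
    (fun S _ => by positivity)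
  simpa using this

lemma norm_A_sub_one_le {q : ℂ} (hq : ‖q‖ < 1) (t : ℕ) :
    ‖A q t - 1‖ ≤ Real.exp (‖q‖ ^ (t + 1) * (1 - ‖q‖)⁻¹) - 1 := by
  classical
  set r := ‖q‖ with hr
  have hr0 : 0 ≤ r := norm_nonneg q
  set b : Ts t := ⟨∅, by simp⟩ with hb
  have hsc : Summable (fun S : Ts t => q ^ (∑ x ∈ S.1, x)) := summable_Ts hq t
  have hsr : Summable (fun S : Ts t => r ^ (∑ x ∈ S.1, x)) := summable_Ts_real hr0 hq t
  have hcc := Summable.tsum_eq_add_tsum_ite hsc b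
  have hrr := Summable.tsum_eq_add_tsum_ite hsr b
  have hb0 : (∑ x ∈ (b : Ts t).1, x) = 0 := by simp [hb]
  have h1 : A q t - 1 = ∑' S : Ts t, (if S = b then 0 else q ^ (∑ x ∈ S.1, x)) := by
    rw [A, hcc, hb0]
    simp
  have h2 : (∑' S : Ts t, r ^ (∑ x ∈ S.1, x)) - 1
      = ∑' S : Ts t, (if S = b then 0 else r ^ (∑ x ∈ S.1, x)) := by
    rw [hrr, hb0]
    simp
  rw [h1]
  have hsr' : Summable (fun S : Ts t => if S = b then 0 else r ^ (∑ x ∈ S.1, x)) := by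
    refine hsr.of_nonneg_of_le (fun S => ?_) (fun S => ?_)
    · split
      · exact le_rfl
      · positivity
    · split
      · positivity
      · exact le_rfl
  have hnorm : ∀ S : Ts t, ‖(if S = b then (0:ℂ) else q ^ (∑ x ∈ S.1, x))‖
      = (if S = b then (0:ℝ) else r ^ (∑ x ∈ S.1, x)) := by
    intro S
    split <;> simp [hr, map_pow]
  have hsum_norm : Summable (fun S : Ts t => ‖(if S = b then (0:ℂ) else q ^ (∑ x ∈ S.1, x))‖) :=
    hsr'.congr (fun S => (hnorm S).symm)
  have h3 := norm_tsum_le_tsum_norm hsum_norm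
  rw [tsum_congr hnorm] at h3
  refine h3.trans ?_
  rw [← h2]
  have := tsum_Ts_real_le hr0 hq t
  linarith

lemma norm_A_le {q : ℂ} (hq : ‖q‖ < 1) (t : ℕ) :
    ‖A q t‖ ≤ Real.exp ((1 - ‖q‖)⁻¹) := by
  set r := ‖q‖ with hr
  have hr0 : 0 ≤ r := norm_nonneg q
  have h1 : ‖A q t‖ ≤ ∑' S : Ts t, r ^ (∑ x ∈ S.1, x) := by
    have hnorm : ∀ S : Ts t, ‖q ^ (∑ x ∈ S.1, x)‖ = r ^ (∑ x ∈ S.1, x) := by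
      intro S; simp [hr, map_pow]
    have hsum_norm : Summable (fun S : Ts t => ‖q ^ (∑ x ∈ S.1, x)‖) :=
      (summable_Ts_real hr0 hq t).congr (fun S => (hnorm S).symm)
    have h3 := norm_tsum_le_tsum_norm hsum_norm
    rw [tsum_congr hnorm] at h3
    exact h3
  refine h1.trans ((tsum_Ts_real_le hr0 hq t).trans ?_)
  refine Real.exp_le_exp.2 ?_
  have h2 : r ^ (t + 1) ≤ 1 := pow_le_one₀ hr0 hq.le
  have h3 : (0:ℝ) ≤ (1 - r)⁻¹ := by
    have : (0:ℝ) < 1 - r := by linarith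
    positivity
  nlinarith


set_option maxHeartbeats 800000 in
lemma A_succ {q : ℂ} (hq : ‖q‖ < 1) (s : ℕ) :
    A q s = (1 + q ^ (s + 1)) * A q (s + 1) := by
  classical
  set f : Ts s → ℂ := fun S => q ^ (∑ x ∈ S.1, x) with hf
  have hsum : Summable f := summable_Ts hq s
  set P : Set (Ts s) := {S : Ts s | (s + 1) ∈ S.1} with hP
  have hsplit := Summable.tsum_add_tsum_compl (s := P) (hsum.subtype P) (hsum.subtype Pᶜ)
  -- the complement part
  let e1 : Ts (s+1) ≃ ↑Pᶜ :=
    { toFun := fun S => ⟨⟨S.1, fun x hx => lt_trans (Nat.lt_succ_self s) (S.2 x hx)⟩,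
        fun hmem => lt_irrefl _ (S.2 _ hmem)⟩
      invFun := fun x => ⟨x.1.1, fun y hy => by
        have h1 := x.1.2 y hy
        have h2 : y ≠ s + 1 := fun he => x.2 (show (s+1) ∈ x.1.1 from he ▸ hy)
        omega⟩
      left_inv := fun S => Subtype.ext rfl
      right_inv := fun x => Subtype.ext (Subtype.ext rfl) }
  have h1 : ∑' x : ↑Pᶜ, f x.1 = A q (s+1) := by
    rw [← Equiv.tsum_eq e1 (fun x : ↑Pᶜ => f x.1), A]
    refine tsum_congr fun S => ?_
    simp only [hf]
    rfl
  -- the P part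
  let e2 : Ts (s+1) ≃ ↑P :=
    { toFun := fun S => ⟨⟨insert (s+1) S.1, fun x hx => by
        rcases Finset.mem_insert.1 hx with h | h
        · omega
        · exact lt_trans (Nat.lt_succ_self s) (S.2 x h)⟩, Finset.mem_insert_self _ _⟩
      invFun := fun x => ⟨x.1.1.erase (s+1), fun y hy => by
        have h1 := x.1.2 y (Finset.mem_of_mem_erase hy)
        have h2 := Finset.ne_of_mem_erase hy
        omega⟩
      left_inv := fun S => Subtype.ext (Finset.erase_insert
        (fun hmem => lt_irrefl _ (S.2 _ hmem)))
      right_inv := fun x => Subtype.ext (Subtype.ext (Finset.insert_erase x.2)) }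
  have h2 : ∑' x : ↑P, f x.1 = q ^ (s+1) * A q (s+1) := by
    rw [← Equiv.tsum_eq e2 (fun x : ↑P => f x.1), A, ← tsum_mul_left]
    refine tsum_congr fun S => ?_
    have hnot : (s + 1) ∉ S.1 := fun hmem => lt_irrefl _ (S.2 _ hmem)
    simp only [hf]
    have hval : ((e2 S).1 : Ts s).1 = insert (s+1) S.1 := rfl
    rw [hval, Finset.sum_insert hnot, pow_add]
  have hA : A q s = ∑' S : Ts s, f S := rfl
  rw [hA, ← hsplit, h1, h2]
  ring

lemma tendsto_A {q : ℂ} (hq : ‖q‖ < 1) :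
    Filter.Tendsto (fun t => A q t) Filter.atTop (nhds 1) := by
  set r := ‖q‖ with hr
  have hr0 : 0 ≤ r := norm_nonneg q
  have hbound : Filter.Tendsto (fun t : ℕ => Real.exp (r ^ (t+1) * (1 - r)⁻¹) - 1)
      Filter.atTop (nhds 0) := by
    have h1 : Filter.Tendsto (fun t : ℕ => r ^ (t+1) * (1 - r)⁻¹) Filter.atTop (nhds 0) := by
      have := tendsto_pow_atTop_nhds_zero_of_lt_one hr0 hq
      have h2 := (this.comp (Filter.tendsto_add_atTop_nat 1)).mul_const ((1 - r)⁻¹)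
      simpa using h2
    have h3 := (Real.continuous_exp.tendsto 0).comp h1
    simp only [Real.exp_zero] at h3
    have h4 := h3.sub_const 1
    simpa using h4
  have hsub : Filter.Tendsto (fun t => A q t - 1) Filter.atTop (nhds 0) := by
    refine squeeze_zero_norm (fun t => ?_) hbound
    exact norm_A_sub_one_le hq t
  have := hsub.add_const 1
  simpa using this

noncomputable def Fk (q : ℂ) (k : ℕ) : ℂ := ∑' s : ℕ, q ^ (k * (s + 1)) * A q (s + 1)

lemma summable_geom_mul {q : ℂ} (hq : ‖q‖ < 1) {k : ℕ} (hk : 1 ≤ k) (g : ℕ → ℂ) {C : ℝ}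
    (hg : ∀ s, ‖g s‖ ≤ C) : Summable (fun s : ℕ => q ^ (k * (s + 1)) * g s) := by
  set r := ‖q‖ with hr
  have hr0 : 0 ≤ r := norm_nonneg q
  have hC : 0 ≤ C := le_trans (norm_nonneg _) (hg 0)
  refine Summable.of_norm_bounded (g := fun s => r ^ (s+1) * C) ?_ (fun s => ?_)
  · have : Summable (fun s : ℕ => r ^ s) := summable_geometric_of_lt_one hr0 hq
    refine (this.mul_left (r * C)).congr (fun s => ?_)
    rw [pow_succ]
    ring
  · rw [norm_mul, norm_pow]
    have h1 : r ^ (k * (s+1)) ≤ r ^ (s+1) := by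
      refine pow_le_pow_of_le_one hr0 hq.le ?_
      nlinarith
    calc ‖q‖ ^ (k * (s+1)) * ‖g s‖ ≤ r ^ (s+1) * C := by
          refine mul_le_mul h1 (hg s) (norm_nonneg _) (by positivity)

lemma summable_Fk {q : ℂ} (hq : ‖q‖ < 1) {k : ℕ} (hk : 1 ≤ k) :
    Summable (fun s : ℕ => q ^ (k * (s + 1)) * A q (s + 1)) :=
  summable_geom_mul hq hk _ (fun s => norm_A_le hq (s+1))

lemma summable_Fk' {q : ℂ} (hq : ‖q‖ < 1) {k : ℕ} (hk : 1 ≤ k) :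
    Summable (fun s : ℕ => q ^ (k * (s + 1)) * A q s) :=
  summable_geom_mul hq hk _ (fun s => norm_A_le hq s)

lemma Fk_one {q : ℂ} (hq : ‖q‖ < 1) : Fk q 1 = A q 0 - 1 := by
  have hsum : Summable (fun s : ℕ => q ^ (1 * (s + 1)) * A q (s + 1)) := summable_Fk hq le_rfl
  have hpartial : ∀ N : ℕ, ∑ s ∈ Finset.range N, q ^ (1 * (s + 1)) * A q (s + 1)
      = A q 0 - A q N := by
    intro N
    have : ∀ s : ℕ, q ^ (1 * (s + 1)) * A q (s + 1) = A q s - A q (s+1) := by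
      intro s
      rw [A_succ hq s]
      ring
    rw [Finset.sum_congr rfl (fun s _ => this s)]
    exact Finset.sum_range_sub' (fun s => A q s) N
  have h1 : Filter.Tendsto (fun N => ∑ s ∈ Finset.range N, q ^ (1 * (s + 1)) * A q (s + 1))
      Filter.atTop (nhds (A q 0 - 1)) := by
    have h2 : Filter.Tendsto (fun N => A q 0 - A q N) Filter.atTop (nhds (A q 0 - 1)) :=
      Filter.Tendsto.sub tendsto_const_nhds (tendsto_A hq)
    refine h2.congr fun N => (hpartial N).symm
  have h3 := hsum.hasSum.tendsto_sum_nat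
  exact tendsto_nhds_unique h3 h1

lemma Fk_rec {q : ℂ} (hq : ‖q‖ < 1) {k : ℕ} (hk : 1 ≤ k) :
    Fk q (k + 1) = (q ^ k - 1) * Fk q k + q ^ k * A q 0 := by
  have hsum1 : Summable (fun s : ℕ => q ^ ((k+1) * (s + 1)) * A q (s + 1)) :=
    summable_Fk hq (by omega)
  have hsum2 : Summable (fun s : ℕ => q ^ (k * (s + 1)) * A q (s + 1)) := summable_Fk hq hk
  have hsum3 : Summable (fun s : ℕ => q ^ (k * (s + 1)) * A q s) := summable_Fk' hq hk
  have key : ∀ s : ℕ, q ^ ((k+1) * (s + 1)) * A q (s + 1) + q ^ (k * (s + 1)) * A q (s + 1)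
      = q ^ (k * (s + 1)) * A q s := by
    intro s
    rw [A_succ hq s]
    have : (k+1) * (s+1) = k * (s+1) + (s+1) := by ring
    rw [this, pow_add]
    ring
  have hadd : Fk q (k+1) + Fk q k = ∑' s : ℕ, q ^ (k * (s + 1)) * A q s := by
    rw [Fk, Fk, ← Summable.tsum_add hsum1 hsum2]
    exact tsum_congr key
  have hshift : ∑' s : ℕ, q ^ (k * (s + 1)) * A q s
      = q ^ k * A q 0 + q ^ k * Fk q k := by
    rw [Summable.tsum_eq_zero_add hsum3]
    congr 1
    · norm_num
    · rw [Fk, ← tsum_mul_left]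
      refine tsum_congr fun s => ?_
      have : k * (s + 1 + 1) = k + k * (s + 1) := by ring
      rw [this, pow_add]
      ring
  have := hadd.trans hshift
  linear_combination this

lemma qPoch_zero (q : ℂ) : qPoch q q 0 = 1 := by simp [qPoch]

lemma qPoch_succ (q : ℂ) (k : ℕ) : qPoch q q (k + 1) = qPoch q q k * (1 - q ^ (k + 1)) := by
  rw [qPoch, Finset.prod_range_succ, ← qPoch]
  congr 2
  rw [← pow_succ']

lemma Fk_eq {q : ℂ} (hq : ‖q‖ < 1) : ∀ k : ℕ, 1 ≤ k →
    Fk q k = Pkd q k * A q 0 + (-1) ^ k * qPoch q q (k - 1) := by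
  intro k hk
  induction k with
  | zero => omega
  | succ k ih =>
    rcases Nat.eq_or_lt_of_le hk with h | h
    · have hk0 : k = 0 := by omega
      subst hk0
      rw [Fk_one hq]
      simp [Pkd, qPoch_zero]
      ring
    · have hk1 : 1 ≤ k := by omega
      have hih := ih hk1
      rw [Fk_rec hq hk1, hih]
      have hP : Pkd q (k + 1) = (q ^ k - 1) * Pkd q k + q ^ k := by
        obtain ⟨j, rfl⟩ : ∃ j, k = j + 1 := ⟨k - 1, by omega⟩
        rfl
      have hQ : qPoch q q ((k+1) - 1) = qPoch q q (k - 1) * (1 - q ^ k) := by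
        obtain ⟨j, rfl⟩ : ∃ j, k = j + 1 := ⟨k - 1, by omega⟩
        simpa using qPoch_succ q j
      rw [hP, hQ]
      ring


/-! ### The infinite product -/

noncomputable def shiftEquiv : Finset ℕ ≃ Ts 0 where
  toFun S := ⟨S.map ⟨Nat.succ, Nat.succ_injective⟩, by
    intro x hx
    rcases Finset.mem_map.1 hx with ⟨y, _, rfl⟩
    exact Nat.succ_pos y⟩
  invFun T := T.1.image (fun x => x - 1)
  left_inv S := by
    show (S.map ⟨Nat.succ, Nat.succ_injective⟩).image (fun x => x - 1) = S
    rw [Finset.map_eq_image, Finset.image_image]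
    calc S.image ((fun x => x - 1) ∘ fun a => Nat.succ a)
        = S.image id := Finset.image_congr (fun x _ => by simp)
      _ = S := Finset.image_id
  right_inv T := by
    refine Subtype.ext ?_
    show (T.1.image (fun x => x - 1)).map ⟨Nat.succ, Nat.succ_injective⟩ = T.1
    rw [Finset.map_eq_image, Finset.image_image]
    calc T.1.image ((fun a => Nat.succ a) ∘ fun x => x - 1)
        = T.1.image id := Finset.image_congr (fun x hx => by
          have := T.2 x hx
          simp only [Function.comp_apply, id_eq]
          omega)
      _ = T.1 := Finset.image_id

lemma shiftEquiv_sum (S : Finset ℕ) :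
    (∑ x ∈ (shiftEquiv S).1, x) = ∑ j ∈ S, (j + 1) := by
  have h : (shiftEquiv S).1 = S.map ⟨Nat.succ, Nat.succ_injective⟩ := rfl
  rw [h, Finset.sum_map]
  rfl

lemma A_zero {q : ℂ} (hq : ‖q‖ < 1) : qPochInf (-q) q = A q 0 := by
  classical
  set g : Finset ℕ → ℂ := fun S => q ^ (∑ j ∈ S, (j + 1)) with hg
  have hsum0 : Summable (fun T : Ts 0 => q ^ (∑ x ∈ T.1, x)) := summable_Ts hq 0
  have hsg : Summable g := by
    refine ((Equiv.summable_iff shiftEquiv).2 hsum0).congr (fun S => ?_)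
    simp only [Function.comp_apply, hg]
    rw [shiftEquiv_sum]
  have htsum : ∑' S : Finset ℕ, g S = A q 0 := by
    have h := Equiv.tsum_eq shiftEquiv (fun T : Ts 0 => q ^ (∑ x ∈ T.1, x))
    rw [A, ← h]
    exact tsum_congr fun S => by rw [hg, shiftEquiv_sum]
  have hhs : HasSum g (A q 0) := htsum ▸ hsg.hasSum
  have hpow : Filter.Tendsto (fun U : Finset ℕ => U.powerset) Filter.atTop Filter.atTop := by
    rw [Filter.tendsto_atTop_atTop]
    intro W
    refine ⟨W.sup id, fun U hU => ?_⟩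
    rw [Finset.le_iff_subset]
    intro S hS
    exact Finset.mem_powerset.2 ((Finset.le_sup (f := id) hS).trans hU)
  have hprodnet : Filter.Tendsto (fun U : Finset ℕ => ∑ S ∈ U.powerset, g S)
      Filter.atTop (nhds (A q 0)) := hhs.comp hpow
  have hasprod : HasProd (fun j : ℕ => 1 + q ^ (j + 1)) (A q 0) := by
    show Filter.Tendsto (fun U : Finset ℕ => ∏ j ∈ U, (1 + q ^ (j + 1)))
      Filter.atTop (nhds (A q 0))
    have heq : (fun U : Finset ℕ => ∏ j ∈ U, (1 + q ^ (j + 1)))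
        = fun U => ∑ S ∈ U.powerset, g S := by
      funext U
      rw [hg]
      exact prod_one_add_pow q (fun j => j + 1) U
    rw [heq]
    exact hprodnet
  rw [qPochInf]
  have heq2 : (fun j : ℕ => 1 - (-q) * q ^ j) = fun j : ℕ => 1 + q ^ (j + 1) := by
    funext j
    rw [pow_succ']
    ring
  rw [heq2]
  exact hasprod.tprod_eq

/-! ### Combinatorics -/

abbrev TT := Σ s : ℕ, Ts (s + 1)

def wT (k : ℕ) (p : TT) : ℕ := k * (p.1 + 1) + ∑ x ∈ p.2.1, x

lemma finset_val_sum (S : Finset ℕ) : S.val.sum = ∑ x ∈ S, x := by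
  show S.val.sum = (S.val.map (fun x => x)).sum
  rw [Multiset.map_id']

lemma decomp_props {k s : ℕ} (hk : 1 ≤ k) (hs : 0 < s) {S : Finset ℕ}
    (hS : ∀ x ∈ S, s < x) :
    (∀ x ∈ (Multiset.replicate k s + S.val), 0 < x) ∧
    (Multiset.replicate k s + S.val).sum = k * s + ∑ x ∈ S, x ∧
    s ∈ (Multiset.replicate k s + S.val) ∧
    (∀ x ∈ (Multiset.replicate k s + S.val), s ≤ x) ∧
    (Multiset.replicate k s + S.val).count s = k ∧
    (∀ x ∈ (Multiset.replicate k s + S.val), x ≠ s →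
      (Multiset.replicate k s + S.val).count x = 1) := by
  classical
  have hmem : ∀ x ∈ (Multiset.replicate k s + S.val), x = s ∨ x ∈ S := by
    intro x hx
    rcases Multiset.mem_add.1 hx with h | h
    · exact Or.inl (Multiset.eq_of_mem_replicate h)
    · exact Or.inr (Finset.mem_def.2 h)
  have hsnotS : s ∉ S.val := fun h => lt_irrefl s (hS s (Finset.mem_def.2 h))
  refine ⟨?_, ?_, ?_, ?_, ?_, ?_⟩
  · intro x hx
    rcases hmem x hx with h | h
    · omega
    · have := hS x h; omega
  · rw [Multiset.sum_add, Multiset.sum_replicate, smul_eq_mul, finset_val_sum]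
  · exact Multiset.mem_add.2 (Or.inl (Multiset.mem_replicate.2 ⟨by omega, rfl⟩))
  · intro x hx
    rcases hmem x hx with h | h
    · omega
    · exact (hS x h).le
  · rw [Multiset.count_add, Multiset.count_replicate_self,
      Multiset.count_eq_zero.2 hsnotS]
    omega
  · intro x hx hxs
    have hxS : x ∈ S.val := by
      rcases hmem x hx with h | h
      · exact absurd h hxs
      · exact Finset.mem_def.1 h
    have hsx : ¬ s = x := fun h => hxs h.symm
    rw [Multiset.count_add, Multiset.count_replicate,
      Multiset.count_eq_one_of_mem S.nodup hxS, if_neg hsx]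

lemma decomp_mem {k : ℕ} (hk : 1 ≤ k) {n : ℕ} (p : TT) (hw : wT k p = n) :
    (∀ x ∈ (Multiset.replicate k (p.1 + 1) + p.2.1.val), 0 < x) ∧
    (Multiset.replicate k (p.1 + 1) + p.2.1.val).sum = n ∧
    ∃ s, s ∈ (Multiset.replicate k (p.1 + 1) + p.2.1.val) ∧
      (∀ x ∈ (Multiset.replicate k (p.1 + 1) + p.2.1.val), s ≤ x) ∧
      (Multiset.replicate k (p.1 + 1) + p.2.1.val).count s = k ∧
      ∀ x ∈ (Multiset.replicate k (p.1 + 1) + p.2.1.val), x ≠ s →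
        (Multiset.replicate k (p.1 + 1) + p.2.1.val).count x = 1 := by
  obtain ⟨s, S, hS⟩ := p
  obtain ⟨h1, h2, h3, h4, h5, h6⟩ := decomp_props (s := s + 1) hk (Nat.succ_pos s) hS
  have hw' : k * (s + 1) + ∑ x ∈ S, x = n := hw
  exact ⟨h1, by rw [h2]; exact hw', ⟨s + 1, h3, h4, h5, h6⟩⟩

lemma sptkd_card {k : ℕ} (hk : 1 ≤ k) (n : ℕ) :
    sptkd k n = Nat.card {p : TT // wT k p = n} := by
  classical
  rw [sptkd]
  refine (Nat.card_eq_of_bijective (f := fun p : {p : TT // wT k p = n} =>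
    (⟨Multiset.replicate k (p.1.1 + 1) + p.1.2.1.val, decomp_mem hk p.1 p.2⟩ :
      {m : Multiset ℕ // (∀ x ∈ m, 0 < x) ∧ m.sum = n ∧
        ∃ s, s ∈ m ∧ (∀ x ∈ m, s ≤ x) ∧ m.count s = k ∧
          ∀ x ∈ m, x ≠ s → m.count x = 1})) ⟨?_, ?_⟩).symm
  · -- injective
    rintro ⟨⟨s₁, S₁, hS₁⟩, hw₁⟩ ⟨⟨s₂, S₂, hS₂⟩, hw₂⟩ h
    simp only [Subtype.mk.injEq] at h
    obtain ⟨hp1, -, hm1, hmin1, -, -⟩ := decomp_props hk (Nat.succ_pos s₁) hS₁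
    obtain ⟨hp2, -, hm2, hmin2, -, -⟩ := decomp_props hk (Nat.succ_pos s₂) hS₂
    have hs : s₁ = s₂ := by
      have h12 := hmin1 (s₂ + 1) (h ▸ hm2)
      have h21 := hmin2 (s₁ + 1) (h.symm ▸ hm1)
      omega
    subst hs
    have hSeq : S₁ = S₂ := by
      have := add_left_cancel (a := Multiset.replicate k (s₁ + 1)) h
      exact Finset.val_injective this
    subst hSeq
    rfl
  · -- surjective
    rintro ⟨m, h1, h2, s, hsmem, hmin, hcount, hdist⟩
    have hspos : 0 < s := h1 s hsmem
    set S : Finset ℕ := (m.filter (fun x => ¬ x = s)).toFinset with hSdef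
    have hnodup : (m.filter (fun x => ¬ x = s)).Nodup := by
      rw [Multiset.nodup_iff_count_le_one]
      intro x
      rw [Multiset.count_filter]
      split
      · rename_i hxs
        by_cases hxm : x ∈ m
        · rw [hdist x hxm hxs]
        · rw [Multiset.count_eq_zero.2 hxm]; omega
      · omega
    have hSval : S.val = m.filter (fun x => ¬ x = s) := by
      rw [hSdef, Multiset.toFinset_val, Multiset.dedup_eq_self.2 hnodup]
    have hdecomp : m = Multiset.replicate k s + S.val := by
      rw [hSval]
      conv_lhs => rw [← Multiset.filter_add_not (fun x => x = s) m]
      congr 1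
      rw [Multiset.filter_eq', hcount]
    have hSgt : ∀ x ∈ S, s < x := by
      intro x hx
      rw [hSdef, Multiset.mem_toFinset, Multiset.mem_filter] at hx
      have := hmin x hx.1
      have := hx.2
      omega
    have hSgt' : ∀ x ∈ S, (s - 1) + 1 < x := by
      intro x hx; have := hSgt x hx; omega
    have hw : wT k ⟨s - 1, ⟨S, hSgt'⟩⟩ = n := by
      show k * ((s - 1) + 1) + ∑ x ∈ S, x = n
      have hs1 : (s - 1) + 1 = s := by omega
      rw [hs1]
      have := decomp_props hk hspos hSgt
      rw [← this.2.1, ← hdecomp, h2]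
    refine ⟨⟨⟨s - 1, ⟨S, hSgt'⟩⟩, hw⟩, ?_⟩
    refine Subtype.ext ?_
    show Multiset.replicate k ((s - 1) + 1) + S.val = m
    have hs1 : (s - 1) + 1 = s := by omega
    rw [hs1, ← hdecomp]

lemma fiber_mem {k : ℕ} (hk : 1 ≤ k) {n : ℕ} (p : TT) (hw : wT k p = n) :
    (p.1, p.2.1) ∈ (Finset.range (n + 1)) ×ˢ (Finset.range (n + 1)).powerset := by
  obtain ⟨s, S, hS⟩ := p
  dsimp only
  have hw' : k * (s + 1) + ∑ x ∈ S, x = n := hw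
  rw [Finset.mem_product]
  constructor
  · rw [Finset.mem_range]
    have h1 : 1 * (s + 1) ≤ k * (s + 1) := Nat.mul_le_mul_right _ hk
    omega
  · rw [Finset.mem_powerset]
    intro x hx
    rw [Finset.mem_range]
    have hxle : x ≤ ∑ y ∈ S, y :=
      Finset.single_le_sum (f := fun y => y) (fun _ _ => Nat.zero_le _) hx
    omega

lemma finite_fiber {k : ℕ} (hk : 1 ≤ k) (n : ℕ) : Finite {p : TT // wT k p = n} := by
  classical
  refine Finite.of_injective (β := ↥((Finset.range (n + 1)) ×ˢ (Finset.range (n + 1)).powerset))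
    (fun p => ⟨(p.1.1, p.1.2.1), fiber_mem hk p.1 p.2⟩) ?_
  rintro ⟨⟨s₁, S₁⟩, h₁⟩ ⟨⟨s₂, S₂⟩, h₂⟩ h
  simp only [Subtype.mk.injEq, Prod.mk.injEq] at h
  obtain ⟨hs, hS⟩ := h
  subst hs
  have : S₁ = S₂ := Subtype.ext hS
  subst this
  rfl

lemma sptkd_zero (k : ℕ) : sptkd k 0 = 0 := by
  rw [sptkd]
  haveI : IsEmpty {m : Multiset ℕ // (∀ x ∈ m, 0 < x) ∧ m.sum = 0 ∧
      ∃ s, s ∈ m ∧ (∀ x ∈ m, s ≤ x) ∧ m.count s = k ∧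
        ∀ x ∈ m, x ≠ s → m.count x = 1} := by
    refine ⟨?_⟩
    rintro ⟨m, h1, h2, s, hsmem, -, -, -⟩
    have hle : s ≤ m.sum := Multiset.single_le_sum (fun x _ => Nat.zero_le x) s hsmem
    have := h1 s hsmem
    omega
  exact Nat.card_of_isEmpty

lemma tsum_Ts_real_le' {r : ℝ} (hr0 : 0 ≤ r) (hr1 : r < 1) (t : ℕ) :
    ∑' S : Ts t, r ^ (∑ x ∈ S.1, x) ≤ Real.exp ((1 - r)⁻¹) := by
  refine (tsum_Ts_real_le hr0 hr1 t).trans (Real.exp_le_exp.2 ?_)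
  have h2 : r ^ (t + 1) ≤ 1 := pow_le_one₀ hr0 hr1.le
  have h3 : (0 : ℝ) ≤ (1 - r)⁻¹ := by
    have : (0 : ℝ) < 1 - r := by linarith
    positivity
  nlinarith

lemma hasSum_main {q : ℂ} (hq : ‖q‖ < 1) {k : ℕ} (hk : 1 ≤ k) :
    HasSum (fun n : ℕ => (sptkd k n : ℂ) * q ^ n) (Fk q k) := by
  classical
  set r := ‖q‖ with hr
  have hr0 : 0 ≤ r := norm_nonneg q
  set f : TT → ℂ := fun p => q ^ (wT k p) with hfdef
  have hfs : Summable f := by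
    refine Summable.of_norm ?_
    have heq : (fun p : TT => ‖f p‖) = fun p : TT => r ^ (wT k p) := by
      funext p
      simp [hfdef, hr, map_pow]
    rw [heq]
    rw [summable_sigma_of_nonneg (fun p => by positivity)]
    constructor
    · intro s
      have := (summable_Ts_real hr0 hq (s + 1)).mul_left (r ^ (k * (s + 1)))
      refine this.congr fun S => ?_
      rw [← pow_add]
      rfl
    · refine Summable.of_nonneg_of_le (fun s => ?_) (fun s => ?_)
        ((summable_geometric_of_lt_one hr0 hq).mul_left
          (Real.exp ((1 - r)⁻¹) * r))
      · exact tsum_nonneg (fun S => by positivity)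
      · have hstep : ∑' S : Ts (s + 1), r ^ (wT k ⟨s, S⟩)
            = r ^ (k * (s + 1)) * ∑' S : Ts (s + 1), r ^ (∑ x ∈ S.1, x) := by
          rw [← tsum_mul_left]
          exact tsum_congr fun S => by rw [← pow_add]; rfl
        rw [hstep]
        have hb1 : ∑' S : Ts (s + 1), r ^ (∑ x ∈ S.1, x) ≤ Real.exp ((1 - r)⁻¹) :=
          tsum_Ts_real_le' hr0 hq (s + 1)
        have hb2 : r ^ (k * (s + 1)) ≤ r ^ (s + 1) := by
          refine pow_le_pow_of_le_one hr0 hq.le ?_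
          nlinarith
        have hb3 : (0 : ℝ) ≤ ∑' S : Ts (s + 1), r ^ (∑ x ∈ S.1, x) :=
          tsum_nonneg (fun S => by positivity)
        calc r ^ (k * (s + 1)) * ∑' S : Ts (s + 1), r ^ (∑ x ∈ S.1, x)
            ≤ r ^ (s + 1) * Real.exp ((1 - r)⁻¹) :=
              mul_le_mul hb2 hb1 hb3 (by positivity)
          _ = Real.exp ((1 - r)⁻¹) * r * r ^ s := by rw [pow_succ]; ring
  have htsum : ∑' p : TT, f p = Fk q k := by
    rw [Summable.tsum_sigma hfs, Fk]
    refine tsum_congr fun s => ?_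
    have h1 : ∀ S : Ts (s + 1), f ⟨s, S⟩ = q ^ (k * (s + 1)) * q ^ (∑ x ∈ S.1, x) := by
      intro S
      rw [hfdef, ← pow_add]
      rfl
    rw [tsum_congr h1, tsum_mul_left]
    rfl
  have hhs : HasSum f (Fk q k) := htsum ▸ hfs.hasSum
  have hfib := hhs.tsum_fiberwise (wT k)
  have heq : (fun n : ℕ => ∑' p : (wT k) ⁻¹' {n}, f p.1)
      = fun n : ℕ => (sptkd k n : ℂ) * q ^ n := by
    funext n
    have hfin : Finite {p : TT // wT k p = n} := finite_fiber hk n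
    have he : {p : TT // wT k p = n} ≃ ↥((wT k) ⁻¹' {n}) :=
      Equiv.subtypeEquivRight (fun p => by simp [Set.mem_preimage])
    haveI : Finite ↥((wT k) ⁻¹' {n}) := Finite.of_equiv _ he
    haveI := Fintype.ofFinite ↥((wT k) ⁻¹' {n})
    rw [tsum_fintype]
    have hconst : ∀ p : ↥((wT k) ⁻¹' {n}), f p.1 = q ^ n := by
      intro p
      have hn : wT k p.1 = n := p.2
      show q ^ (wT k p.1) = q ^ n
      rw [hn]
    rw [Finset.sum_congr rfl (fun p _ => hconst p), Finset.sum_const, Finset.card_univ,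
      sptkd_card hk n, Nat.card_congr he, Nat.card_eq_fintype_card, nsmul_eq_mul]
  rw [← heq]
  exact hfib

end SptkdAux

/-- Andrews–Bachraoui Theorem 1: generating function for `sptkd k`. -/
theorem sptkd_genFn (k : ℕ) (hk : 1 ≤ k) (q : ℂ) (hq : ‖q‖ < 1) :
    ∑' n : ℕ, (sptkd k (n + 1) : ℂ) * q ^ (n + 1) =
      Pkd q k * qPochInf (-q) q + (-1) ^ k * qPoch q q (k - 1) := by
  have hq' : ‖q‖ < 1 := hq
  have hmain := SptkdAux.hasSum_main hq' hk
  have hsummable := hmain.summable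
  have hshift := Summable.tsum_eq_zero_add hsummable
  rw [hmain.tsum_eq] at hshift
  rw [SptkdAux.sptkd_zero] at hshift
  simp only [Nat.cast_zero, zero_mul, zero_add] at hshift
  rw [← hshift, SptkdAux.Fk_eq hq' k hk, SptkdAux.A_zero hq']
end
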